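/- arXiv:2603.13542 — 5 statements merged into one kernel-verified Lean document; each statement's English description precedes it below -/
import Mathlib

section
/- Let d be a positive integer, α > 0, and let A and B be symmetric real d×d matrices. Then E[(tr(A) − ZᵀAZ)(tr(B) − ZᵀBZ) exp(-α ZᵀZ)] = (1+2α)^{-(d/2+2)} ( 4α² tr(A) tr(B) + 2 tr(AB) ), where the expectation is the normalized Gaussian integral (2π)^{-d/2} ∫_{ℝ^d} (tr(A) − zᵀAz)(tr(B) − zᵀBz) exp(-α ‖z‖²) exp(-‖z‖²/2) dz. -/
open MeasureTheory Matrix Real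

open Filter


variable {b : ℝ}

lemma integrable_moment (hb : 0 < b) (n : ℕ) :
    Integrable fun x : ℝ => x ^ n * Real.exp (-b * x ^ 2) := by
  have := integrable_rpow_mul_exp_neg_mul_sq hb (s := (n : ℝ))
    (by exact_mod_cast neg_one_lt_zero.trans_le (Nat.cast_nonneg n))
  simpa [Real.rpow_natCast] using this

lemma hasDerivAt_gauss (hb : 0 < b) (x : ℝ) :
    HasDerivAt (fun x : ℝ => -(2 * b)⁻¹ * Real.exp (-b * x ^ 2))
      (x * Real.exp (-b * x ^ 2)) x := by
  have h1 : HasDerivAt (fun x : ℝ => -b * x ^ 2) (-b * (2 * x)) x := by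
    simpa using ((hasDerivAt_pow 2 x).const_mul (-b))
  have h2 := (h1.exp).const_mul (-(2 * b)⁻¹)
  refine h2.congr_deriv ?_
  field_simp

lemma moment_rec (hb : 0 < b) (n : ℕ) :
    ∫ x : ℝ, x ^ (n + 2) * Real.exp (-b * x ^ 2)
      = ((n + 1 : ℝ) / (2 * b)) * ∫ x : ℝ, x ^ n * Real.exp (-b * x ^ 2) := by
  have hu : ∀ x : ℝ, HasDerivAt (fun x : ℝ => x ^ (n + 1))
      (((n : ℝ) + 1) * x ^ n) x := by
    intro x
    simpa using hasDerivAt_pow (n + 1) x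
  have key := MeasureTheory.integral_mul_deriv_eq_deriv_mul_of_integrable
      (u := fun x : ℝ => x ^ (n + 1)) (v := fun x : ℝ => -(2 * b)⁻¹ * Real.exp (-b * x ^ 2))
      (u' := fun x : ℝ => ((n : ℝ) + 1) * x ^ n)
      (v' := fun x : ℝ => x * Real.exp (-b * x ^ 2))
      (fun x _ => hu x) (fun x _ => hasDerivAt_gauss hb x) ?_ ?_ ?_
  · have l1 : (∫ x : ℝ, x ^ (n + 1) * (x * Real.exp (-b * x ^ 2)))
        = ∫ x : ℝ, x ^ (n + 2) * Real.exp (-b * x ^ 2) := by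
      congr 1; funext x; ring
    have l2 : (∫ x : ℝ, ((n : ℝ) + 1) * x ^ n * (-(2 * b)⁻¹ * Real.exp (-b * x ^ 2)))
        = (-(((n : ℝ) + 1) / (2 * b))) * ∫ x : ℝ, x ^ n * Real.exp (-b * x ^ 2) := by
      rw [← integral_const_mul]
      congr 1; funext x; field_simp
    rw [l1, l2] at key
    rw [key]; ring
  · apply Integrable.congr (integrable_moment hb (n + 2))
    filter_upwards with x
    simp [Pi.mul_apply]; ring
  · apply Integrable.congr ((integrable_moment hb n).const_mul (((n : ℝ) + 1) * (-(2 * b)⁻¹)))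
    filter_upwards with x
    simp [Pi.mul_apply]; ring
  · apply Integrable.congr ((integrable_moment hb (n + 1)).const_mul (-(2 * b)⁻¹))
    filter_upwards with x
    simp [Pi.mul_apply]; ring

lemma moment_one (hb : 0 < b) :
    ∫ x : ℝ, x ^ 1 * Real.exp (-b * x ^ 2) = 0 := by
  have hexp : Tendsto (fun x : ℝ => -(2 * b)⁻¹ * Real.exp (-b * x ^ 2)) atTop (nhds 0) := by
    have : Tendsto (fun x : ℝ => -b * x ^ 2) atTop atBot := by
      apply Tendsto.const_mul_atTop_of_neg (neg_neg_iff_pos.mpr hb)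
      exact tendsto_pow_atTop (two_ne_zero)
    simpa using ((Real.tendsto_exp_atBot.comp this).const_mul (-(2 * b)⁻¹))
  have hexp' : Tendsto (fun x : ℝ => -(2 * b)⁻¹ * Real.exp (-b * x ^ 2)) atBot (nhds 0) := by
    have h1 : Tendsto (fun x : ℝ => x ^ 2) atTop atTop := tendsto_pow_atTop two_ne_zero
    have hneg : Tendsto (fun x : ℝ => -x) atBot atTop := tendsto_neg_atBot_atTop
    have h2 : Tendsto (fun x : ℝ => x ^ 2) atBot atTop := by
      have h3 := h1.comp hneg
      exact h3.congr fun x => by simp [Function.comp]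
    have : Tendsto (fun x : ℝ => -b * x ^ 2) atBot atBot :=
      Tendsto.const_mul_atTop_of_neg (neg_neg_iff_pos.mpr hb) h2
    simpa using ((Real.tendsto_exp_atBot.comp this).const_mul (-(2 * b)⁻¹))
  have key := MeasureTheory.integral_of_hasDerivAt_of_tendsto (hasDerivAt_gauss hb)
      ?_ hexp' hexp
  · simpa using key
  · apply Integrable.congr (integrable_moment hb 1)
    filter_upwards with x
    simp

/-- nth moment of the unnormalized Gaussian. -/
noncomputable def gmom (b : ℝ) (n : ℕ) : ℝ := ∫ x : ℝ, x ^ n * Real.exp (-b * x ^ 2)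

/-- normalized moments -/
noncomputable def grho (b : ℝ) : ℕ → ℝ := fun n =>
  if n = 0 then 1 else if n = 2 then (2 * b)⁻¹ else if n = 4 then 3 * ((2 * b)⁻¹) ^ 2 else 0

lemma gmom_zero (hb : 0 < b) : gmom b 0 = √(π / b) := by
  simp only [gmom, pow_zero, one_mul]
  exact integral_gaussian b

lemma gmom_two (hb : 0 < b) : gmom b 2 = √(π / b) * (2 * b)⁻¹ := by
  have hb' : (2 * b) ≠ 0 := by positivity
  have := moment_rec hb 0
  simp only [zero_add, Nat.cast_zero] at this
  rw [gmom, this]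
  simp only [pow_zero, one_mul, integral_gaussian]
  ring

lemma gmom_eq (hb : 0 < b) (n : ℕ) (hn : n ≤ 4) :
    gmom b n = √(π / b) * grho b n := by
  have hb' : (2 * b) ≠ 0 := by positivity
  interval_cases n
  · simp [gmom_zero hb, grho]
  · simpa [gmom, grho] using moment_one hb
  · rw [gmom_two hb]; simp [grho]
  · have := moment_rec hb 1
    simp only [Nat.cast_one] at this
    rw [gmom, this, ← gmom]
    have h1 : gmom b 1 = 0 := moment_one hb
    simp [h1, grho]
  · have := moment_rec hb 2
    simp only [Nat.cast_ofNat] at this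
    rw [gmom, this, ← gmom, gmom_two hb]
    simp only [grho, if_neg, if_pos]
    norm_num
    field_simp

section Multi

variable {d : ℕ}

lemma integrable_monomial (hb : 0 < b) (e : Fin d → ℕ) :
    Integrable (fun x : Fin d → ℝ => ∏ m, (x m ^ e m * Real.exp (-b * x m ^ 2))) :=
  Integrable.fintype_prod (f := fun m (t : ℝ) => t ^ e m * Real.exp (-b * t ^ 2))
    (fun m => integrable_moment hb (e m))

lemma integral_monomial (hb : 0 < b) (e : Fin d → ℕ) :
    ∫ x : Fin d → ℝ, ∏ m, (x m ^ e m * Real.exp (-b * x m ^ 2)) = ∏ m, gmom b (e m) :=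
  integral_fintype_prod_eq_prod (fun m (t : ℝ) => t ^ e m * Real.exp (-b * t ^ 2))

lemma prod_pow_single (x : Fin d → ℝ) (i : Fin d) :
    ∏ m, x m ^ (if m = i then 1 else 0) = x i := by
  have : ∀ m : Fin d, x m ^ (if m = i then 1 else 0) = (if m = i then x m else 1) := by
    intro m; split_ifs <;> simp
  rw [Finset.prod_congr rfl (fun m _ => this m), Finset.prod_ite_eq']
  simp

lemma grho_le_bound (u v w y : ℕ) (hu : u ≤ 1) (hv : v ≤ 1) (hw : w ≤ 1) (hy : y ≤ 1) :
    u + v + w + y ≤ 4 := by omega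

lemma gmom_factor (hb : 0 < b) (e : Fin d → ℕ) (he : ∀ m, e m ≤ 4) :
    ∏ m, gmom b (e m) = √(π / b) ^ d * ∏ m, grho b (e m) := by
  rw [Finset.prod_congr rfl (fun m _ => gmom_eq hb (e m) (he m)), Finset.prod_mul_distrib]
  simp

lemma mon2_eq (i j : Fin d) :
    (fun x : Fin d → ℝ => x i * x j * ∏ m, Real.exp (-b * x m ^ 2))
      = fun x => ∏ m, (x m ^ ((if m = i then 1 else 0) + (if m = j then 1 else 0))
          * Real.exp (-b * x m ^ 2)) := by
  funext x
  rw [Finset.prod_mul_distrib]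
  congr 1
  simp_rw [pow_add]
  rw [Finset.prod_mul_distrib, prod_pow_single, prod_pow_single]

lemma mon4_eq (i j k l : Fin d) :
    (fun x : Fin d → ℝ => x i * x j * x k * x l * ∏ m, Real.exp (-b * x m ^ 2))
      = fun x => ∏ m, (x m ^ ((if m = i then 1 else 0) + (if m = j then 1 else 0)
          + (if m = k then 1 else 0) + (if m = l then 1 else 0))
          * Real.exp (-b * x m ^ 2)) := by
  funext x
  rw [Finset.prod_mul_distrib]
  congr 1
  simp_rw [pow_add]
  rw [Finset.prod_mul_distrib, Finset.prod_mul_distrib, Finset.prod_mul_distrib,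
    prod_pow_single, prod_pow_single, prod_pow_single, prod_pow_single]

lemma integrable_two (hb : 0 < b) (i j : Fin d) :
    Integrable (fun x : Fin d → ℝ => x i * x j * ∏ m, Real.exp (-b * x m ^ 2)) := by
  rw [mon2_eq]
  exact integrable_monomial hb _

lemma integrable_four (hb : 0 < b) (i j k l : Fin d) :
    Integrable (fun x : Fin d → ℝ => x i * x j * x k * x l * ∏ m, Real.exp (-b * x m ^ 2)) := by
  rw [mon4_eq]
  exact integrable_monomial hb _

lemma integral_two (hb : 0 < b) (i j : Fin d) :
    ∫ x : Fin d → ℝ, x i * x j * ∏ m, Real.exp (-b * x m ^ 2)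
      = (if i = j then (2 * b)⁻¹ else 0) * √(π / b) ^ d := by
  rw [mon2_eq, integral_monomial hb,
    gmom_factor hb _ (fun m => by split_ifs <;> norm_num)]
  by_cases hij : i = j
  · subst hij
    have hpt : ∀ m : Fin d, grho b ((if m = i then 1 else 0) + (if m = i then 1 else 0))
        = (if m = i then (2 * b)⁻¹ else 1) := by
      intro m; by_cases h : m = i <;> simp [h, grho]
    rw [Finset.prod_congr rfl (fun m _ => hpt m), Finset.prod_ite_eq']
    simp; ring
  · have hz : grho b ((if i = i then 1 else 0) + (if i = j then 1 else 0)) = 0 := by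
      simp [hij, grho]
    rw [Finset.prod_eq_zero (Finset.mem_univ i) hz]
    simp [hij]

lemma integral_four (hb : 0 < b) (i j k l : Fin d) :
    ∫ x : Fin d → ℝ, x i * x j * x k * x l * ∏ m, Real.exp (-b * x m ^ 2)
      = ((if i = j then 1 else 0) * (if k = l then 1 else 0)
          + (if i = k then 1 else 0) * (if j = l then 1 else 0)
          + (if i = l then 1 else 0) * (if j = k then 1 else 0)) * ((2 * b)⁻¹) ^ 2
          * √(π / b) ^ d := by
  rw [mon4_eq, integral_monomial hb,
    gmom_factor hb _ (fun m => grho_le_bound _ _ _ _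
      (by split_ifs <;> norm_num) (by split_ifs <;> norm_num)
      (by split_ifs <;> norm_num) (by split_ifs <;> norm_num))]
  by_cases hij : i = j
  · subst hij
    by_cases hkl : k = l
    · subst hkl
      by_cases hik : i = k
      · -- all four equal
        subst hik
        have hpt : ∀ m : Fin d, grho b ((if m = i then 1 else 0) + (if m = i then 1 else 0)
            + (if m = i then 1 else 0) + (if m = i then 1 else 0))
            = (if m = i then 3 * ((2 * b)⁻¹) ^ 2 else 1) := by
          intro m; by_cases h : m = i <;> simp [h, grho]
        rw [Finset.prod_congr rfl (fun m _ => hpt m), Finset.prod_ite_eq']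
        simp; ring
      · -- two pairs: i=j, k=l, i ≠ k
        have hpt : ∀ m : Fin d, grho b ((if m = i then 1 else 0) + (if m = i then 1 else 0)
            + (if m = k then 1 else 0) + (if m = k then 1 else 0))
            = (if m = i then (2 * b)⁻¹ else 1) * (if m = k then (2 * b)⁻¹ else 1) := by
          intro m
          by_cases h1 : m = i <;> by_cases h2 : m = k <;> simp_all [grho]
        rw [Finset.prod_congr rfl (fun m _ => hpt m), Finset.prod_mul_distrib,
          Finset.prod_ite_eq', Finset.prod_ite_eq']
        have hki : ¬ k = i := fun h => hik h.symm
        simp [hik, hki]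
        ring
    · -- i = j, k ≠ l : odd exponent somewhere
      by_cases hik : i = k
      · -- l is alone
        have hz : grho b ((if l = i then 1 else 0) + (if l = i then 1 else 0)
            + (if l = k then 1 else 0) + (if l = l then 1 else 0)) = 0 := by
          have h1 : l ≠ k := fun h => hkl h.symm
          have h2 : l ≠ i := fun h => hkl (hik.symm ▸ h.symm ▸ rfl)
          simp [h1, h2, grho]
        rw [Finset.prod_eq_zero (Finset.mem_univ l) hz]
        have hil : i ≠ l := by rw [hik]; exact hkl
        simp [hkl, hil]
      · -- k is alone or has exponent 1
        by_cases hil : i = l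
        · have hz : grho b ((if k = i then 1 else 0) + (if k = i then 1 else 0)
              + (if k = k then 1 else 0) + (if k = l then 1 else 0)) = 0 := by
            have h1 : k ≠ i := fun h => hik h.symm
            have h2 : k ≠ l := hkl
            simp [h1, h2, grho]
          rw [Finset.prod_eq_zero (Finset.mem_univ k) hz]
          simp [hkl, hik]
        · have hz : grho b ((if k = i then 1 else 0) + (if k = i then 1 else 0)
              + (if k = k then 1 else 0) + (if k = l then 1 else 0)) = 0 := by
            have h1 : k ≠ i := fun h => hik h.symm
            simp [h1, hkl, grho]
          rw [Finset.prod_eq_zero (Finset.mem_univ k) hz]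
          simp [hkl, hik, hil]
  · -- i ≠ j
    by_cases hik : i = k
    · subst hik
      by_cases hjl : j = l
      · -- pair i=k, j=l, i≠j
        subst hjl
        have hpt : ∀ m : Fin d, grho b ((if m = i then 1 else 0) + (if m = j then 1 else 0)
            + (if m = i then 1 else 0) + (if m = j then 1 else 0))
            = (if m = i then (2 * b)⁻¹ else 1) * (if m = j then (2 * b)⁻¹ else 1) := by
          intro m
          by_cases h1 : m = i <;> by_cases h2 : m = j <;> simp_all [grho]
        rw [Finset.prod_congr rfl (fun m _ => hpt m), Finset.prod_mul_distrib,
          Finset.prod_ite_eq', Finset.prod_ite_eq']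
        have hji : ¬ j = i := fun h => hij h.symm
        simp [hij, hji]
        ring
      · -- j has odd exponent
        have hz : grho b ((if j = i then 1 else 0) + (if j = j then 1 else 0)
            + (if j = i then 1 else 0) + (if j = l then 1 else 0)) = 0 := by
          have h1 : j ≠ i := fun h => hij h.symm
          simp [h1, hjl, grho]
        rw [Finset.prod_eq_zero (Finset.mem_univ j) hz]
        have hji : ¬ j = i := fun h => hij h.symm
        simp [hji, hjl, hij]
    · by_cases hil : i = l
      · subst hil
        by_cases hjk : j = k
        · -- pair i=l, j=k, i≠j
          subst hjk
          have hpt : ∀ m : Fin d, grho b ((if m = i then 1 else 0) + (if m = j then 1 else 0)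
              + (if m = j then 1 else 0) + (if m = i then 1 else 0))
              = (if m = i then (2 * b)⁻¹ else 1) * (if m = j then (2 * b)⁻¹ else 1) := by
            intro m
            by_cases h1 : m = i <;> by_cases h2 : m = j <;> simp_all [grho]
          rw [Finset.prod_congr rfl (fun m _ => hpt m), Finset.prod_mul_distrib,
            Finset.prod_ite_eq', Finset.prod_ite_eq']
          have hji : ¬ j = i := fun h => hij h.symm
          simp [hij, hji]
          ring
        · -- j has odd exponent
          have hz : grho b ((if j = i then 1 else 0) + (if j = j then 1 else 0)
              + (if j = k then 1 else 0) + (if j = i then 1 else 0)) = 0 := by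
            have h1 : j ≠ i := fun h => hij h.symm
            simp [h1, hjk, grho]
          rw [Finset.prod_eq_zero (Finset.mem_univ j) hz]
          have hji : ¬ j = i := fun h => hij h.symm
          simp [hji, hjk, hij]
      · -- i has exponent 1
        have hz : grho b ((if i = i then 1 else 0) + (if i = j then 1 else 0)
            + (if i = k then 1 else 0) + (if i = l then 1 else 0)) = 0 := by
          simp [hij, hik, hil, grho]
        rw [Finset.prod_eq_zero (Finset.mem_univ i) hz]
        simp [hij, hik, hil]

end Multi


section Core

variable {d : ℕ}

lemma sumdelta1 (f g : Fin d → Fin d → ℝ) (c : ℝ) :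
    ∑ i, ∑ j, ∑ k, ∑ l, f i j * g k l *
        ((if i = j then (1:ℝ) else 0) * (if k = l then (1:ℝ) else 0) * c)
      = (∑ i, f i i) * (∑ k, g k k) * c := by
  simp only [mul_ite, ite_mul, mul_zero, zero_mul, mul_one, one_mul,
    Finset.sum_ite_irrel, Finset.sum_ite_eq, Finset.sum_ite_eq', Finset.mem_univ, if_true,
    Finset.sum_const_zero]
  rw [Finset.sum_mul, Finset.sum_mul]
  refine Finset.sum_congr rfl fun i _ => ?_
  rw [Finset.mul_sum, Finset.sum_mul]

lemma sumdelta2 (f g : Fin d → Fin d → ℝ) (c : ℝ) :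
    ∑ i, ∑ j, ∑ k, ∑ l, f i j * g k l *
        ((if i = k then (1:ℝ) else 0) * (if j = l then (1:ℝ) else 0) * c)
      = (∑ i, ∑ j, f i j * g i j) * c := by
  simp only [mul_ite, ite_mul, mul_zero, zero_mul, mul_one, one_mul,
    Finset.sum_ite_irrel, Finset.sum_ite_eq, Finset.sum_ite_eq', Finset.mem_univ, if_true,
    Finset.sum_const_zero]
  rw [Finset.sum_mul]
  refine Finset.sum_congr rfl fun i _ => ?_
  rw [Finset.sum_mul]

lemma sumdelta3 (f g : Fin d → Fin d → ℝ) (c : ℝ) :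
    ∑ i, ∑ j, ∑ k, ∑ l, f i j * g k l *
        ((if i = l then (1:ℝ) else 0) * (if j = k then (1:ℝ) else 0) * c)
      = (∑ i, ∑ j, f i j * g j i) * c := by
  simp only [mul_ite, ite_mul, mul_zero, zero_mul, mul_one, one_mul,
    Finset.sum_ite_irrel, Finset.sum_ite_eq, Finset.sum_ite_eq', Finset.mem_univ, if_true,
    Finset.sum_const_zero]
  rw [Finset.sum_mul]
  refine Finset.sum_congr rfl fun i _ => ?_
  rw [Finset.sum_mul]

lemma core_integral (hb : 0 < b) (A B : Matrix (Fin d) (Fin d) ℝ) :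
    ∫ x : Fin d → ℝ, ((A.trace - ∑ i, ∑ j, x i * A i j * x j) *
        (B.trace - ∑ i, ∑ j, x i * B i j * x j) * ∏ m, Real.exp (-b * x m ^ 2))
    = √(π / b) ^ d * ((1 - (2 * b)⁻¹) ^ 2 * (A.trace * B.trace)
        + ((2 * b)⁻¹) ^ 2 * ((∑ i, ∑ j, A i j * B i j) + (∑ i, ∑ j, A i j * B j i))) := by
  have hrwB : (fun x : Fin d → ℝ =>
      (∑ k, ∑ l, x k * B k l * x l) * ∏ m, Real.exp (-b * x m ^ 2))
      = fun x => ∑ k, ∑ l, B k l * (x k * x l * ∏ m, Real.exp (-b * x m ^ 2)) := by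
    funext x
    rw [Finset.sum_mul]
    refine Finset.sum_congr rfl fun k _ => ?_
    rw [Finset.sum_mul]
    exact Finset.sum_congr rfl fun l _ => by ring
  have hrwA : (fun x : Fin d → ℝ =>
      (∑ k, ∑ l, x k * A k l * x l) * ∏ m, Real.exp (-b * x m ^ 2))
      = fun x => ∑ k, ∑ l, A k l * (x k * x l * ∏ m, Real.exp (-b * x m ^ 2)) := by
    funext x
    rw [Finset.sum_mul]
    refine Finset.sum_congr rfl fun k _ => ?_
    rw [Finset.sum_mul]
    exact Finset.sum_congr rfl fun l _ => by ring
  have hrw4 : (fun x : Fin d → ℝ => (∑ i, ∑ j, x i * A i j * x j) *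
      (∑ k, ∑ l, x k * B k l * x l) * ∏ m, Real.exp (-b * x m ^ 2))
      = fun x => ∑ i, ∑ j, ∑ k, ∑ l, A i j * B k l *
          (x i * x j * x k * x l * ∏ m, Real.exp (-b * x m ^ 2)) := by
    funext x
    rw [show (∑ i, ∑ j, x i * A i j * x j) * (∑ k, ∑ l, x k * B k l * x l)
        * ∏ m, Real.exp (-b * x m ^ 2)
        = (∑ k, ∑ l, x k * B k l * x l) * (∑ i, ∑ j, x i * A i j * x j)
        * ∏ m, Real.exp (-b * x m ^ 2) from by ring]
    simp only [Finset.sum_mul, Finset.mul_sum]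
    exact Finset.sum_congr rfl fun i _ => Finset.sum_congr rfl fun j _ =>
      Finset.sum_congr rfl fun k _ => Finset.sum_congr rfl fun l _ => by
        simp only [neg_mul]; ring
  -- integrabilities
  have hP0 : Integrable (fun x : Fin d → ℝ => ∏ m, Real.exp (-b * x m ^ 2)) := by
    have := integrable_monomial hb (d := d) (fun _ => 0)
    simpa using this
  have hiQB : Integrable (fun x : Fin d → ℝ =>
      (∑ k, ∑ l, x k * B k l * x l) * ∏ m, Real.exp (-b * x m ^ 2)) := by
    rw [hrwB]
    exact integrable_finset_sum _ fun k _ => integrable_finset_sum _ fun l _ =>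
      (integrable_two hb k l).const_mul _
  have hiQA : Integrable (fun x : Fin d → ℝ =>
      (∑ k, ∑ l, x k * A k l * x l) * ∏ m, Real.exp (-b * x m ^ 2)) := by
    rw [hrwA]
    exact integrable_finset_sum _ fun k _ => integrable_finset_sum _ fun l _ =>
      (integrable_two hb k l).const_mul _
  have hiQQ : Integrable (fun x : Fin d → ℝ => (∑ i, ∑ j, x i * A i j * x j) *
      (∑ k, ∑ l, x k * B k l * x l) * ∏ m, Real.exp (-b * x m ^ 2)) := by
    rw [hrw4]
    exact integrable_finset_sum _ fun i _ => integrable_finset_sum _ fun j _ =>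
      integrable_finset_sum _ fun k _ => integrable_finset_sum _ fun l _ =>
        (integrable_four hb i j k l).const_mul _
  -- component integrals
  have IP : ∫ x : Fin d → ℝ, ∏ m, Real.exp (-b * x m ^ 2) = √(π / b) ^ d := by
    have := integral_monomial hb (d := d) (fun _ => 0)
    simp only [pow_zero, one_mul] at this
    rw [this]
    simp [gmom_zero hb]
  have I2B : ∫ x : Fin d → ℝ,
      (∑ k, ∑ l, x k * B k l * x l) * ∏ m, Real.exp (-b * x m ^ 2)
      = B.trace * ((2 * b)⁻¹ * √(π / b) ^ d) := by
    rw [hrwB, integral_finset_sum _ (fun k _ => integrable_finset_sum _ fun l _ =>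
      (integrable_two hb k l).const_mul (B k l))]
    rw [Finset.sum_congr rfl (fun k _ => integral_finset_sum _
      (fun l _ => (integrable_two hb k l).const_mul (B k l)))]
    rw [Finset.sum_congr rfl (fun k _ => Finset.sum_congr rfl (fun l _ => by
      rw [integral_const_mul, integral_two hb k l]))]
    simp only [mul_ite, ite_mul, mul_zero, zero_mul, Finset.sum_ite_eq,
      Finset.mem_univ, if_true]
    rw [← Finset.sum_mul]
    simp [Matrix.trace, Matrix.diag]
  have I2A : ∫ x : Fin d → ℝ,
      (∑ k, ∑ l, x k * A k l * x l) * ∏ m, Real.exp (-b * x m ^ 2)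
      = A.trace * ((2 * b)⁻¹ * √(π / b) ^ d) := by
    rw [hrwA, integral_finset_sum _ (fun k _ => integrable_finset_sum _ fun l _ =>
      (integrable_two hb k l).const_mul (A k l))]
    rw [Finset.sum_congr rfl (fun k _ => integral_finset_sum _
      (fun l _ => (integrable_two hb k l).const_mul (A k l)))]
    rw [Finset.sum_congr rfl (fun k _ => Finset.sum_congr rfl (fun l _ => by
      rw [integral_const_mul, integral_two hb k l]))]
    simp only [mul_ite, ite_mul, mul_zero, zero_mul, Finset.sum_ite_eq,
      Finset.mem_univ, if_true]
    rw [← Finset.sum_mul]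
    simp [Matrix.trace, Matrix.diag]
  have I4 : ∫ x : Fin d → ℝ, (∑ i, ∑ j, x i * A i j * x j) *
      (∑ k, ∑ l, x k * B k l * x l) * ∏ m, Real.exp (-b * x m ^ 2)
      = (A.trace * B.trace + ((∑ i, ∑ j, A i j * B i j) + (∑ i, ∑ j, A i j * B j i)))
          * (((2 * b)⁻¹) ^ 2 * √(π / b) ^ d) := by
    rw [hrw4]
    rw [integral_finset_sum _ (fun i _ => integrable_finset_sum _ fun j _ =>
      integrable_finset_sum _ fun k _ => integrable_finset_sum _ fun l _ =>
        (integrable_four hb i j k l).const_mul _)]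
    rw [Finset.sum_congr rfl (fun i _ => integral_finset_sum _
      (fun j _ => integrable_finset_sum _ fun k _ => integrable_finset_sum _ fun l _ =>
        (integrable_four hb i j k l).const_mul _))]
    rw [Finset.sum_congr rfl (fun i _ => Finset.sum_congr rfl (fun j _ =>
      integral_finset_sum _ (fun k _ => integrable_finset_sum _ fun l _ =>
        (integrable_four hb i j k l).const_mul _)))]
    rw [Finset.sum_congr rfl (fun i _ => Finset.sum_congr rfl (fun j _ =>
      Finset.sum_congr rfl (fun k _ => integral_finset_sum _
        (fun l _ => (integrable_four hb i j k l).const_mul _))))]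
    rw [Finset.sum_congr rfl (fun i _ => Finset.sum_congr rfl (fun j _ =>
      Finset.sum_congr rfl (fun k _ => Finset.sum_congr rfl (fun l _ => by
        rw [integral_const_mul, integral_four hb i j k l]))))]
    have hsplit : ∀ i j k l : Fin d, A i j * B k l *
        (((if i = j then (1:ℝ) else 0) * (if k = l then (1:ℝ) else 0)
          + (if i = k then (1:ℝ) else 0) * (if j = l then (1:ℝ) else 0)
          + (if i = l then (1:ℝ) else 0) * (if j = k then (1:ℝ) else 0))
          * ((2 * b)⁻¹) ^ 2 * √(π / b) ^ d)
        = A i j * B k l * ((if i = j then (1:ℝ) else 0) * (if k = l then (1:ℝ) else 0)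
            * (((2 * b)⁻¹) ^ 2 * √(π / b) ^ d))
          + A i j * B k l * ((if i = k then (1:ℝ) else 0) * (if j = l then (1:ℝ) else 0)
            * (((2 * b)⁻¹) ^ 2 * √(π / b) ^ d))
          + A i j * B k l * ((if i = l then (1:ℝ) else 0) * (if j = k then (1:ℝ) else 0)
            * (((2 * b)⁻¹) ^ 2 * √(π / b) ^ d)) := by
      intro i j k l; ring
    rw [Finset.sum_congr rfl (fun i _ => Finset.sum_congr rfl (fun j _ =>
      Finset.sum_congr rfl (fun k _ => Finset.sum_congr rfl (fun l _ => hsplit i j k l))))]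
    simp only [Finset.sum_add_distrib]
    rw [sumdelta1 (fun i j => A i j) (fun k l => B k l),
      sumdelta2 (fun i j => A i j) (fun k l => B k l),
      sumdelta3 (fun i j => A i j) (fun k l => B k l)]
    have htr : A.trace = ∑ i, A i i := by simp [Matrix.trace, Matrix.diag]
    have htrB : B.trace = ∑ i, B i i := by simp [Matrix.trace, Matrix.diag]
    rw [htr, htrB]
    ring
  -- expand the product
  have hsplit2 : (fun x : Fin d → ℝ => (A.trace - ∑ i, ∑ j, x i * A i j * x j) *
      (B.trace - ∑ i, ∑ j, x i * B i j * x j) * ∏ m, Real.exp (-b * x m ^ 2))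
      = fun x => (A.trace * B.trace * ∏ m, Real.exp (-b * x m ^ 2)
          - A.trace * ((∑ k, ∑ l, x k * B k l * x l) * ∏ m, Real.exp (-b * x m ^ 2))
          - B.trace * ((∑ k, ∑ l, x k * A k l * x l) * ∏ m, Real.exp (-b * x m ^ 2)))
          + (∑ i, ∑ j, x i * A i j * x j) * (∑ k, ∑ l, x k * B k l * x l)
            * ∏ m, Real.exp (-b * x m ^ 2) := by
    funext x; ring
  rw [hsplit2]
  have e1 : Integrable (fun x : Fin d → ℝ =>
      A.trace * B.trace * ∏ m, Real.exp (-b * x m ^ 2)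
        - A.trace * ((∑ k, ∑ l, x k * B k l * x l) * ∏ m, Real.exp (-b * x m ^ 2))) :=
    (hP0.const_mul _).sub (hiQB.const_mul _)
  have e2 : Integrable (fun x : Fin d → ℝ =>
      A.trace * B.trace * ∏ m, Real.exp (-b * x m ^ 2)
        - A.trace * ((∑ k, ∑ l, x k * B k l * x l) * ∏ m, Real.exp (-b * x m ^ 2))
        - B.trace * ((∑ k, ∑ l, x k * A k l * x l) * ∏ m, Real.exp (-b * x m ^ 2))) :=
    e1.sub (hiQA.const_mul _)
  rw [integral_add e2 hiQQ, integral_sub e1 (hiQA.const_mul _),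
    integral_sub (hP0.const_mul _) (hiQB.const_mul _),
    integral_const_mul, integral_const_mul, integral_const_mul, IP, I2B, I2A, I4]
  ring

end Core

/-- For symmetric `A`, `B` and a standard Gaussian vector `Z` in `ℝ^d`,
`E[(tr A − ZᵀAZ)(tr B − ZᵀBZ) exp(-α ZᵀZ)]
  = (1+2α)^{-(d/2+2)} (4α² tr(A) tr(B) + 2 tr(AB))`. -/
theorem gaussian_tilted_centered_quadratic_forms (d : ℕ) (hd : 0 < d)
    (α : ℝ) (hα : 0 < α)
    (A B : Matrix (Fin d) (Fin d) ℝ) (hA : A.IsSymm) (hB : B.IsSymm) :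
    (2 * π) ^ (-(d : ℝ) / 2) *
      ∫ z : EuclideanSpace ℝ (Fin d),
        (A.trace - ∑ i, ∑ j, z i * A i j * z j) *
          (B.trace - ∑ i, ∑ j, z i * B i j * z j) *
          Real.exp (-α * ‖z‖ ^ 2) * Real.exp (-‖z‖ ^ 2 / 2)
      = (1 + 2 * α) ^ (-((d : ℝ) / 2 + 2)) *
          (4 * α ^ 2 * A.trace * B.trace + 2 * (A * B).trace) := by
  have hb : (0 : ℝ) < α + 1 / 2 := by linarith
  have hc : (0 : ℝ) < 1 + 2 * α := by linarith
  -- step 1 : transfer to the product space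
  have step1 : ∫ z : EuclideanSpace ℝ (Fin d),
        (A.trace - ∑ i, ∑ j, z i * A i j * z j) *
          (B.trace - ∑ i, ∑ j, z i * B i j * z j) *
          Real.exp (-α * ‖z‖ ^ 2) * Real.exp (-‖z‖ ^ 2 / 2)
      = ∫ x : Fin d → ℝ,
        ((A.trace - ∑ i, ∑ j, x i * A i j * x j) *
          (B.trace - ∑ i, ∑ j, x i * B i j * x j) *
          ∏ m, Real.exp (-(α + 1 / 2) * x m ^ 2)) := by
    have h1 : ∀ z : EuclideanSpace ℝ (Fin d), ‖z‖ ^ 2 = ∑ i, z i ^ 2 := by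
      intro z
      rw [EuclideanSpace.norm_eq, Real.sq_sqrt (by positivity)]
      simp [sq_abs]
    have h2 : ∀ z : EuclideanSpace ℝ (Fin d),
        Real.exp (-α * ‖z‖ ^ 2) * Real.exp (-‖z‖ ^ 2 / 2)
          = ∏ m, Real.exp (-(α + 1 / 2) * z m ^ 2) := by
      intro z
      rw [← Real.exp_add, ← Real.exp_sum]
      congr 1
      rw [h1]
      rw [show (-α * ∑ i : Fin d, z i ^ 2 + -(∑ i : Fin d, z i ^ 2) / 2)
          = -(α + 1 / 2) * ∑ i, z i ^ 2 from by ring, Finset.mul_sum]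
    calc ∫ z : EuclideanSpace ℝ (Fin d),
          (A.trace - ∑ i, ∑ j, z i * A i j * z j) *
            (B.trace - ∑ i, ∑ j, z i * B i j * z j) *
            Real.exp (-α * ‖z‖ ^ 2) * Real.exp (-‖z‖ ^ 2 / 2)
        = ∫ z : EuclideanSpace ℝ (Fin d),
          (fun x : Fin d → ℝ =>
            (A.trace - ∑ i, ∑ j, x i * A i j * x j) *
            (B.trace - ∑ i, ∑ j, x i * B i j * x j) *
            ∏ m, Real.exp (-(α + 1 / 2) * x m ^ 2))
            ((MeasurableEquiv.toLp 2 (Fin d → ℝ)).symm z) := by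
          congr 1
          funext z
          rw [mul_assoc, h2 z]
          rfl
      _ = _ := by
          exact MeasurePreserving.integral_comp
            (EuclideanSpace.volume_preserving_symm_measurableEquiv_toLp (Fin d))
            (MeasurableEquiv.measurableEmbedding _)
            (fun x : Fin d → ℝ =>
              (A.trace - ∑ i, ∑ j, x i * A i j * x j) *
              (B.trace - ∑ i, ∑ j, x i * B i j * x j) *
              ∏ m, Real.exp (-(α + 1 / 2) * x m ^ 2))
  rw [step1, core_integral hb A B]
  -- symmetry : the two cross sums are both tr(A*B)
  have hsym1 : (∑ i, ∑ j, A i j * B j i) = (A * B).trace := by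
    simp [Matrix.trace, Matrix.diag, Matrix.mul_apply]
  have hsym2 : (∑ i, ∑ j, A i j * B i j) = (A * B).trace := by
    rw [← hsym1]
    exact Finset.sum_congr rfl fun i _ => Finset.sum_congr rfl fun j _ => by
      rw [hB.apply i j]
  rw [hsym1, hsym2]
  -- numeric part
  have h2b : 2 * (α + 1 / 2) = 1 + 2 * α := by ring
  have hkey : (2 * π) ^ (-(d : ℝ) / 2) * √(π / (α + 1 / 2)) ^ d
      = (1 + 2 * α) ^ (-(d : ℝ) / 2) := by
    have hpb : (0 : ℝ) < π / (α + 1 / 2) := by positivity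
    have e1 : √(π / (α + 1 / 2)) ^ d = (π / (α + 1 / 2)) ^ ((d : ℝ) / 2) := by
      rw [Real.sqrt_eq_rpow, ← Real.rpow_natCast ((π / (α + 1 / 2)) ^ ((1:ℝ)/2)) d,
        ← Real.rpow_mul hpb.le]
      congr 1
      ring
    rw [e1, neg_div, Real.rpow_neg (by positivity), inv_mul_eq_div,
      ← Real.div_rpow hpb.le (by positivity : (0:ℝ) ≤ 2 * π)]
    rw [show π / (α + 1 / 2) / (2 * π) = (1 + 2 * α)⁻¹ by
      rw [div_div, ← h2b]; field_simp]
    rw [Real.inv_rpow hc.le, ← Real.rpow_neg hc.le]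
  have hkey2 : (1 + 2 * α) ^ (-((d : ℝ) / 2 + 2))
      = (1 + 2 * α) ^ (-(d : ℝ) / 2) * ((1 + 2 * α)⁻¹) ^ 2 := by
    rw [show (-((d : ℝ) / 2 + 2)) = (-(d : ℝ) / 2) + (-2 : ℝ) by ring,
      Real.rpow_add hc, Real.rpow_neg hc.le, inv_pow]
    congr 2
    rw [show ((2:ℝ) = ((2:ℕ) : ℝ)) by norm_num, Real.rpow_natCast]
  rw [hkey2, ← mul_assoc, hkey, mul_assoc]
  congr 1
  have hinv : (2 * (α + 1 / 2))⁻¹ = (1 + 2 * α)⁻¹ := by rw [h2b]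
  rw [hinv]
  field_simp
  ring
end

section
/- Let d be a positive integer, let Σ₀ be a symmetric positive definite real d×d matrix, set Ω := Σ₀^{-1}, and let α > −1. Then for every nonzero symmetric real d×d matrix H, (α²/(4(1+α))) (tr(ΩH))² + (1/(2(1+α))) tr(ΩHΩH) > 0. Consequently the symmetric bilinear form B(H₁, H₂) := (α²/(4(1+α))) tr(ΩH₁) tr(ΩH₂) + (1/(2(1+α))) tr(ΩH₁ΩH₂) on the vector space of symmetric d×d real matrices is positive definite; in particular, the d(d+1)/2 × d(d+1)/2 matrix M with entries M_{(kl),(rs)} = B(S_{kl}, S_{rs}), indexed by pairs 1 ≤ k ≤ l ≤ d and 1 ≤ r ≤ s ≤ d, is symmetric positive definite and invertible. -/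
open Matrix

set_option maxHeartbeats 1000000 in
lemma aux_trace_sq_pos' {n : Type*} [Fintype n] [DecidableEq n]
    (K : Matrix n n ℝ) (hK : K.IsSymm) (h : K ≠ 0) : 0 < (K * K).trace := by
  have hexp : (K * K).trace = ∑ i, ∑ j, (K i j)^2 := by
    simp only [Matrix.trace, Matrix.diag, Matrix.mul_apply]
    refine Finset.sum_congr rfl fun i _ => Finset.sum_congr rfl fun j _ => ?_
    rw [sq]; congr 1; exact (hK.apply i j).symm ▸ rfl
  rw [hexp]
  obtain ⟨i, j, hij⟩ : ∃ i j, K i j ≠ 0 := by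
    by_contra hc; push_neg at hc
    exact h (by ext i j; exact hc i j)
  refine Finset.sum_pos' (fun i _ => Finset.sum_nonneg fun j _ => sq_nonneg _)
    ⟨i, Finset.mem_univ i, ?_⟩
  exact Finset.sum_pos' (fun j _ => sq_nonneg _) ⟨j, Finset.mem_univ j, by positivity⟩

lemma aux_quad_expand' {n : Type*} [Fintype n] (x t : n → ℝ) (u : n → n → ℝ) (c₁ c₂ : ℝ) :
    ∑ p, ∑ q, x p * ((c₁ * t p * t q + c₂ * u p q) * x q)
      = c₁ * (∑ p, x p * t p)^2 + c₂ * ∑ p, ∑ q, x p * x q * u p q := by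
  have e1 : c₁ * (∑ p, x p * t p)^2 = ∑ p, ∑ q, c₁ * ((x p * t p) * (x q * t q)) := by
    rw [sq, Finset.sum_mul_sum, Finset.mul_sum]
    exact Finset.sum_congr rfl fun p _ => by rw [Finset.mul_sum]
  have e2 : c₂ * ∑ p, ∑ q, x p * x q * u p q = ∑ p, ∑ q, c₂ * (x p * x q * u p q) := by
    rw [Finset.mul_sum]
    exact Finset.sum_congr rfl fun p _ => by rw [Finset.mul_sum]
  rw [e1, e2, ← Finset.sum_add_distrib]
  refine Finset.sum_congr rfl fun p _ => ?_
  rw [← Finset.sum_add_distrib]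
  exact Finset.sum_congr rfl fun q _ => by ring

open scoped MatrixOrder in
lemma aux_form_pos' {d : ℕ} (Om : Matrix (Fin d) (Fin d) ℝ) (hOm : Om.PosDef)
    (α : ℝ) (hα : -1 < α) (H : Matrix (Fin d) (Fin d) ℝ) (hH : H.IsSymm) (hH0 : H ≠ 0) :
    0 < α ^ 2 / (4 * (1 + α)) * (Om * H).trace ^ 2 +
        1 / (2 * (1 + α)) * (Om * H * Om * H).trace := by
  have hOmS := hOm.posSemidef
  set R := CFC.sqrt Om with hRdef
  have hR2 : R * R = Om := CFC.sqrt_mul_sqrt_self Om (Matrix.nonneg_iff_posSemidef.mpr hOmS)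
  have hRsym : R.IsSymm := (Matrix.nonneg_iff_posSemidef.mp (CFC.sqrt_nonneg Om)).1
  have hdet : IsUnit R.det := by
    have hOmdet : Om.det ≠ 0 := hOm.det_pos.ne'
    rw [← hR2, Matrix.det_mul] at hOmdet
    exact isUnit_iff_ne_zero.mpr (left_ne_zero_of_mul hOmdet)
  set K := R * H * R with hKdef
  have hKsym : K.IsSymm := by
    unfold Matrix.IsSymm
    rw [hKdef, Matrix.transpose_mul, Matrix.transpose_mul, hRsym, hH, Matrix.mul_assoc]
  have hK0 : K ≠ 0 := by
    intro hK
    apply hH0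
    have e : R⁻¹ * (R * H * R) * R⁻¹ = H := by
      rw [Matrix.mul_assoc R H R, ← Matrix.mul_assoc R⁻¹ R, Matrix.nonsing_inv_mul R hdet,
        one_mul, Matrix.mul_assoc, Matrix.mul_nonsing_inv R hdet, mul_one]
    rw [← e, ← hKdef, hK, Matrix.mul_zero, Matrix.zero_mul]
  have etr : (K * K).trace = (Om * H * Om * H).trace := by
    have h1 : K * K = (R * H * Om * H) * R := by
      rw [← hR2, hKdef]; simp only [Matrix.mul_assoc]
    have h2 : R * (R * H * Om * H) = Om * H * Om * H := by
      rw [← hR2]; simp only [Matrix.mul_assoc]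
    rw [h1, Matrix.trace_mul_comm, h2]
  have hKK := aux_trace_sq_pos' K hKsym hK0
  have h1a : (0:ℝ) < 1 + α := by linarith
  have t1 : 0 ≤ α ^ 2 / (4 * (1 + α)) * (Om * H).trace ^ 2 :=
    mul_nonneg (div_nonneg (sq_nonneg α) (by linarith)) (sq_nonneg _)
  have t2 : 0 < 1 / (2 * (1 + α)) * (Om * H * Om * H).trace := by
    rw [← etr]
    exact mul_pos (by positivity) hKK
  linarith


lemma aux_S_entry' {d : ℕ} (S : Fin d → Fin d → Matrix (Fin d) (Fin d) ℝ)
    (hS : ∀ k l, S k l =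
      if k = l then Matrix.single k k (1 : ℝ)
      else Matrix.single k l (1 : ℝ) + Matrix.single l k (1 : ℝ))
    (p q : {q : Fin d × Fin d // q.1 ≤ q.2}) :
    (S p.1.1 p.1.2) q.1.1 q.1.2 = if p = q then 1 else 0 := by
  rcases p with ⟨⟨k,l⟩,hkl⟩; rcases q with ⟨⟨r,s⟩,hrs⟩
  simp only [hS, Subtype.mk_eq_mk, Prod.mk.injEq]
  simp only [Matrix.single, Matrix.of_apply, Matrix.add_apply]
  split_ifs <;> simp_all [Fin.ext_iff, Prod.ext_iff] <;> (try omega) <;>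
    (simp only [Fin.le_def] at hkl hrs; split_ifs <;> simp_all <;> omega)

lemma aux_S_symm' {d : ℕ} (S : Fin d → Fin d → Matrix (Fin d) (Fin d) ℝ)
    (hS : ∀ k l, S k l =
      if k = l then Matrix.single k k (1 : ℝ)
      else Matrix.single k l (1 : ℝ) + Matrix.single l k (1 : ℝ))
    (k l : Fin d) : (S k l).IsSymm := by
  rw [hS]
  split_ifs with h1
  · ext i j; simp [Matrix.single, Matrix.transpose_apply, and_comm]
  · ext i j
    simp only [Matrix.transpose_apply, Matrix.add_apply, Matrix.single,
      Matrix.of_apply]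
    rw [add_comm]
    congr 1 <;> simp [and_comm]

/-- Positive definiteness of the limiting information-type form for the
diffusion-matrix estimator: for `Ω = Sig₀⁻¹` with `Sig₀` symmetric positive
definite and `α > −1`, the form
`H ↦ (α²/(4(1+α))) (tr(ΩH))² + (1/(2(1+α))) tr(ΩHΩH)` is strictly positive on
nonzero symmetric matrices; consequently the `vech`-indexed matrix
`M_{(kl),(rs)}` built from the basis matrices `S_{kl}` is symmetric positive
definite, hence invertible. -/
theorem vech_information_matrix_posDef (d : ℕ) (hd : 0 < d)
    (Sig₀ : Matrix (Fin d) (Fin d) ℝ) (hSig₀ : Sig₀.PosDef)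
    (α : ℝ) (hα : -1 < α)
    (Om : Matrix (Fin d) (Fin d) ℝ) (hOm : Om = Sig₀⁻¹)
    (S : Fin d → Fin d → Matrix (Fin d) (Fin d) ℝ)
    (hS : ∀ k l, S k l =
      if k = l then Matrix.single k k (1 : ℝ)
      else Matrix.single k l (1 : ℝ) + Matrix.single l k (1 : ℝ))
    (M : Matrix {q : Fin d × Fin d // q.1 ≤ q.2} {q : Fin d × Fin d // q.1 ≤ q.2} ℝ)
    (hM : ∀ x y : {q : Fin d × Fin d // q.1 ≤ q.2},
      M x y = α ^ 2 / (4 * (1 + α)) *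
          (Om * S x.1.1 x.1.2).trace * (Om * S y.1.1 y.1.2).trace +
        1 / (2 * (1 + α)) *
          (Om * S x.1.1 x.1.2 * Om * S y.1.1 y.1.2).trace) :
    (∀ H : Matrix (Fin d) (Fin d) ℝ, H.IsSymm → H ≠ 0 →
        0 < α ^ 2 / (4 * (1 + α)) * (Om * H).trace ^ 2 +
            1 / (2 * (1 + α)) * (Om * H * Om * H).trace) ∧
      M.PosDef ∧ IsUnit M := by
  have hOmPD : Om.PosDef := hOm ▸ hSig₀.inv
  have part1 : ∀ H : Matrix (Fin d) (Fin d) ℝ, H.IsSymm → H ≠ 0 →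
      0 < α ^ 2 / (4 * (1 + α)) * (Om * H).trace ^ 2 +
          1 / (2 * (1 + α)) * (Om * H * Om * H).trace :=
    fun H hH hH0 => aux_form_pos' Om hOmPD α hα H hH hH0
  -- entries of S at vech indices
  have hSentry := aux_S_entry' S hS
  -- symmetry of each S
  have hSsym := aux_S_symm' S hS
  -- symmetry of trace term
  have tcomm : ∀ a b : {q : Fin d × Fin d // q.1 ≤ q.2},
      (Om * S a.1.1 a.1.2 * Om * S b.1.1 b.1.2).trace
        = (Om * S b.1.1 b.1.2 * Om * S a.1.1 a.1.2).trace := by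
    intro a b
    rw [Matrix.mul_assoc, Matrix.trace_mul_comm]
    simp only [Matrix.mul_assoc]
  have hMherm : M.IsHermitian := by
    have : M.IsSymm := by
      ext p q
      rw [Matrix.transpose_apply, hM, hM, tcomm]
      ring
    exact this
  have hMpd : M.PosDef := by
    refine Matrix.posDef_iff_dotProduct_mulVec.mpr ⟨hMherm, fun x hx => ?_⟩
    set H : Matrix (Fin d) (Fin d) ℝ := ∑ p : {q : Fin d × Fin d // q.1 ≤ q.2},
      x p • S p.1.1 p.1.2 with hHdef
    have hHsym : H.IsSymm := by
      unfold Matrix.IsSymm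
      rw [hHdef, Matrix.transpose_sum]
      exact Finset.sum_congr rfl fun p _ => by
        rw [Matrix.transpose_smul, hSsym p.1.1 p.1.2]
    have hHentry : ∀ q : {q : Fin d × Fin d // q.1 ≤ q.2}, H q.1.1 q.1.2 = x q := by
      intro q
      simp only [hHdef, Matrix.sum_apply, Matrix.smul_apply, hSentry, smul_eq_mul,
        mul_ite, mul_one, mul_zero, Finset.sum_ite_eq', Finset.mem_univ, if_true]
    have hH0 : H ≠ 0 := by
      intro h0
      apply hx
      funext q
      have := hHentry q
      rw [h0] at this
      show x q = 0
      simpa using this.symm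
    -- trace linearity
    have tT : (Om * H).trace = ∑ p, x p * (Om * S p.1.1 p.1.2).trace := by
      rw [hHdef, Matrix.mul_sum, Matrix.trace_sum]
      exact Finset.sum_congr rfl fun p _ => by
        rw [Matrix.mul_smul, Matrix.trace_smul, smul_eq_mul]
    have tU : (Om * H * Om * H).trace
        = ∑ p, ∑ q, x p * x q * (Om * S p.1.1 p.1.2 * Om * S q.1.1 q.1.2).trace := by
      rw [hHdef]
      simp only [Matrix.mul_sum, Matrix.sum_mul, Matrix.mul_smul, Matrix.smul_mul,
        Matrix.trace_sum, Matrix.trace_smul, smul_eq_mul, smul_smul]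
      rw [Finset.sum_comm]
      refine Finset.sum_congr rfl fun p _ => ?_
      rw [Finset.mul_sum]
      exact Finset.sum_congr rfl fun q _ => by ring
    have hdot : star x ⬝ᵥ M *ᵥ x
        = α ^ 2 / (4 * (1 + α)) * (Om * H).trace ^ 2 +
          1 / (2 * (1 + α)) * (Om * H * Om * H).trace := by
      have : star x ⬝ᵥ M *ᵥ x = ∑ p, ∑ q, x p * (M p q * x q) := by
        simp [dotProduct, Matrix.mulVec, Finset.mul_sum]
      rw [this]
      simp only [hM]
      rw [aux_quad_expand' x (fun p => (Om * S p.1.1 p.1.2).trace)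
        (fun p q => (Om * S p.1.1 p.1.2 * Om * S q.1.1 q.1.2).trace)
        (α ^ 2 / (4 * (1 + α))) (1 / (2 * (1 + α))), tT, tU]
    rw [hdot]
    exact part1 H hHsym hH0
  exact ⟨part1, hMpd, hMpd.isUnit⟩
end

section
/- Let d be a positive integer, α > 0, let Σ₀ be a symmetric positive definite real d×d matrix, and let Λ₀ := Σ₀^{1/2} be its unique symmetric positive definite square root. Define, for every symmetric positive definite d×d matrix Σ, Ψ(Σ) := (1+α)^{-d/2} det(Σ)^{-α/2} − (1 + 1/α) det(Σ)^{-α/2} det( I_d + α Λ₀ Σ^{-1} Λ₀ )^{-1/2}. Then Σ₀ is the unique minimizer of Ψ over the set of symmetric positive definite d×d matrices: Ψ(Σ₀) ≤ Ψ(Σ) for all symmetric positive definite Σ, with equality only if Σ = Σ₀. -/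
open Matrix Real

section Aux

/-- Non-strict Bernoulli reformulation. -/
private lemma dpd_bern {α y : ℝ} (hα : 0 < α) (hy : 0 < y) :
    1 + (1 + 1/α) * (y - 1) ≤ y ^ ((1+α)/α) := by
  have hp : 1 < (1+α)/α := by rw [lt_div_iff₀ hα]; linarith
  have h := one_add_mul_self_le_rpow_one_add (by linarith : (-1:ℝ) ≤ y - 1) hp.le
  have he : (1:ℝ) + (y-1) = y := by ring
  rw [he] at h
  have h2 : (1+α)/α = 1 + 1/α := by field_simp; ring
  nlinarith [h, h2]

private lemma dpd_bern_strict {α y : ℝ} (hα : 0 < α) (hy : 0 < y) (hy1 : y ≠ 1) :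
    1 + (1 + 1/α) * (y - 1) < y ^ ((1+α)/α) := by
  have hp : 1 < (1+α)/α := by rw [lt_div_iff₀ hα]; linarith
  have h := one_add_mul_self_lt_rpow_one_add (by linarith : (-1:ℝ) ≤ y - 1)
    (by intro hh; exact hy1 (by linarith [sub_eq_zero.mp hh])) hp
  have he : (1:ℝ) + (y-1) = y := by ring
  rw [he] at h
  have h2 : (1+α)/α = 1 + 1/α := by field_simp; ring
  nlinarith [h, h2]

/-- Weighted AM-GM per eigenvalue, non-strict. -/
private lemma dpd_perEig {α μ : ℝ} (hα : 0 < α) (hμ : 0 < μ) :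
    (1+α) * μ ^ (α/(1+α)) ≤ 1 + α * μ := by
  set y := μ ^ (α/(1+α)) with hy
  have hypos : 0 < y := rpow_pos_of_pos hμ _
  have hyp : y ^ ((1+α)/α) = μ := by
    rw [hy, ← Real.rpow_mul hμ.le]
    rw [show α/(1+α) * ((1+α)/α) = 1 by field_simp, Real.rpow_one]
  have h := dpd_bern hα hypos
  rw [hyp] at h
  have h' := mul_le_mul_of_nonneg_left h hα.le
  have hexp : α*(1 + (1+1/α)*(y-1)) = (1+α)*y - 1 := by field_simp; ring
  rw [hexp] at h'
  linarith

/-- Weighted AM-GM per eigenvalue, strict. -/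
private lemma dpd_perEig_strict {α μ : ℝ} (hα : 0 < α) (hμ : 0 < μ) (hμ1 : μ ≠ 1) :
    (1+α) * μ ^ (α/(1+α)) < 1 + α * μ := by
  set y := μ ^ (α/(1+α)) with hy
  have hypos : 0 < y := rpow_pos_of_pos hμ _
  have hyp : y ^ ((1+α)/α) = μ := by
    rw [hy, ← Real.rpow_mul hμ.le]
    rw [show α/(1+α) * ((1+α)/α) = 1 by field_simp, Real.rpow_one]
  have hy1 : y ≠ 1 := by
    intro h1; apply hμ1; rw [← hyp, h1, Real.one_rpow]
  have h := dpd_bern_strict hα hypos hy1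
  rw [hyp] at h
  have h' := mul_lt_mul_of_pos_left h hα
  have hexp : α*(1 + (1+1/α)*(y-1)) = (1+α)*y - 1 := by field_simp; ring
  rw [hexp] at h'
  linarith

/-- Tangent-line inequality for the convex map `y ↦ y^((1+α)/α)`. -/
private lemma dpd_phi {α y : ℝ} (hα : 0 < α) (hy : 0 < y) :
    0 ≤ y ^ ((1+α)/α) - (1 + 1/α) * y + 1/α := by
  have h := dpd_bern hα hy
  have h2 : (1:ℝ) + (1 + 1/α) * (y - 1) = (1+1/α)*y - 1/α := by field_simp; ring
  nlinarith [h]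

private lemma dpd_diag_shift {d : ℕ} (α : ℝ) (μ : Fin d → ℝ) :
    (1 : Matrix (Fin d) (Fin d) ℝ) + α • diagonal (RCLike.ofReal ∘ μ) =
      diagonal (fun i => 1 + α * μ i) := by
  rw [← diagonal_one, ← diagonal_smul, ← diagonal_add]
  congr 1

private lemma dpd_spectral_decomp {d : ℕ} {M : Matrix (Fin d) (Fin d) ℝ}
    (hM : M.IsHermitian) (α : ℝ) :
    (1 : Matrix (Fin d) (Fin d) ℝ) + α • M =
      (hM.eigenvectorUnitary : Matrix (Fin d) (Fin d) ℝ) *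
        diagonal (fun i => 1 + α * hM.eigenvalues i) *
        (star hM.eigenvectorUnitary : Matrix (Fin d) (Fin d) ℝ) := by
  have hU : (hM.eigenvectorUnitary : Matrix (Fin d) (Fin d) ℝ) *
      (star hM.eigenvectorUnitary : Matrix (Fin d) (Fin d) ℝ) = 1 :=
    Matrix.mem_unitaryGroup_iff.mp hM.eigenvectorUnitary.2
  rw [← dpd_diag_shift, mul_add, add_mul, mul_one, hU, Matrix.mul_smul, Matrix.smul_mul,
    ← Unitary.conjStarAlgAut_apply (S := ℝ), ← hM.spectral_theorem]

private lemma dpd_det_one_add_smul {d : ℕ} {M : Matrix (Fin d) (Fin d) ℝ}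
    (hM : M.IsHermitian) (α : ℝ) :
    ((1 : Matrix (Fin d) (Fin d) ℝ) + α • M).det = ∏ i, (1 + α * hM.eigenvalues i) := by
  have hU : (hM.eigenvectorUnitary : Matrix (Fin d) (Fin d) ℝ) *
      (star hM.eigenvectorUnitary : Matrix (Fin d) (Fin d) ℝ) = 1 :=
    Matrix.mem_unitaryGroup_iff.mp hM.eigenvectorUnitary.2
  rw [dpd_spectral_decomp hM α, det_mul_right_comm, hU, one_mul, det_diagonal]

private lemma dpd_eq_one_of_eigenvalues {d : ℕ} {M : Matrix (Fin d) (Fin d) ℝ}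
    (hM : M.IsHermitian) (h : ∀ i, hM.eigenvalues i = 1) : M = 1 := by
  have hU : (hM.eigenvectorUnitary : Matrix (Fin d) (Fin d) ℝ) *
      (star hM.eigenvectorUnitary : Matrix (Fin d) (Fin d) ℝ) = 1 :=
    Matrix.mem_unitaryGroup_iff.mp hM.eigenvectorUnitary.2
  have hd : diagonal (RCLike.ofReal ∘ hM.eigenvalues) = (1 : Matrix (Fin d) (Fin d) ℝ) := by
    have he : (RCLike.ofReal ∘ hM.eigenvalues : Fin d → ℝ) = fun _ => 1 := by
      funext i; simp [h i]
    rw [he, diagonal_one]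
  rw [hM.spectral_theorem, Unitary.conjStarAlgAut_apply, hd, mul_one, hU]

/-- Conjugation of a positive definite matrix by an invertible matrix is positive definite. -/
private lemma dpd_posdef_conj {d : ℕ} {A : Matrix (Fin d) (Fin d) ℝ} (hA : A.PosDef)
    {B : Matrix (Fin d) (Fin d) ℝ} (hB : IsUnit B.det) : (Bᴴ * A * B).PosDef := by
  refine Matrix.PosDef.of_dotProduct_mulVec_pos (Matrix.isHermitian_conjTranspose_mul_mul B hA.1) fun x hx => ?_
  have hBx : B *ᵥ x ≠ 0 := by
    intro h0
    exact hx (Matrix.mulVec_injective_iff_isUnit.mpr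
      ((Matrix.isUnit_iff_isUnit_det B).mpr hB) (by simpa using h0))
  simpa only [star_mulVec, dotProduct_mulVec, vecMul_vecMul] using hA.dotProduct_mulVec_pos hBx

end Aux

set_option maxHeartbeats 1000000 in
/-- The limiting DPD criterion `Ψ` for the diffusion matrix is uniquely
minimized at the true value `Σ₀`, where `Λ₀` is the symmetric positive
definite square root of `Σ₀`. -/
theorem dpd_limit_criterion_unique_minimizer (d : ℕ) (hd : 0 < d)
    (α : ℝ) (hα : 0 < α)
    (Sig₀ Lam₀ : Matrix (Fin d) (Fin d) ℝ)
    (hSig₀ : Sig₀.PosDef) (hLam₀ : Lam₀.PosDef) (hsq : Lam₀ * Lam₀ = Sig₀)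
    (Ψ : Matrix (Fin d) (Fin d) ℝ → ℝ)
    (hΨ : ∀ S : Matrix (Fin d) (Fin d) ℝ, S.PosDef →
      Ψ S = (1 + α) ^ (-(d : ℝ) / 2) * S.det ^ (-(α / 2)) -
        (1 + 1 / α) * S.det ^ (-(α / 2)) *
          ((1 : Matrix (Fin d) (Fin d) ℝ) + α • (Lam₀ * S⁻¹ * Lam₀)).det ^
            (-(1 : ℝ) / 2)) :
    ∀ S : Matrix (Fin d) (Fin d) ℝ, S.PosDef →
      Ψ Sig₀ ≤ Ψ S ∧ (Ψ S = Ψ Sig₀ → S = Sig₀) := by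
  intro S hS
  have hα1 : (0:ℝ) < 1 + α := by linarith
  have hLdet : IsUnit Lam₀.det := hLam₀.det_pos.ne'.isUnit
  have hSdetu : IsUnit S.det := hS.det_pos.ne'.isUnit
  have hSig₀inv : Sig₀⁻¹ = Lam₀⁻¹ * Lam₀⁻¹ := by rw [← hsq, Matrix.mul_inv_rev]
  have hMSig : Lam₀ * Sig₀⁻¹ * Lam₀ = 1 := by
    rw [hSig₀inv]
    calc Lam₀ * (Lam₀⁻¹ * Lam₀⁻¹) * Lam₀
        = Lam₀ * Lam₀⁻¹ * (Lam₀⁻¹ * Lam₀) := by simp only [Matrix.mul_assoc]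
      _ = 1 := by
          rw [Matrix.mul_nonsing_inv _ hLdet, Matrix.nonsing_inv_mul _ hLdet, one_mul]
  have main : S ≠ Sig₀ → Ψ Sig₀ < Ψ S := by
    intro hne
    have hMpd : (Lam₀ * S⁻¹ * Lam₀).PosDef := by
      have h := dpd_posdef_conj hS.inv hLdet (B := Lam₀)
      rwa [hLam₀.1] at h
    have hμpos : ∀ i, 0 < hMpd.1.eigenvalues i := fun i => hMpd.eigenvalues_pos i
    have hPpos : 0 < ∏ i, hMpd.1.eigenvalues i := Finset.prod_pos (fun i _ => hμpos i)
    have hPdet : (Lam₀ * S⁻¹ * Lam₀).det = ∏ i, hMpd.1.eigenvalues i := by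
      simpa using hMpd.1.det_eq_prod_eigenvalues
    have hQdet : ((1:Matrix (Fin d) (Fin d) ℝ) + α • (Lam₀ * S⁻¹ * Lam₀)).det
        = ∏ i, (1 + α * hMpd.1.eigenvalues i) := dpd_det_one_add_smul hMpd.1 α
    have hQpos : 0 < ∏ i, (1 + α * hMpd.1.eigenvalues i) :=
      Finset.prod_pos fun i _ => by nlinarith [hμpos i]
    have hdetM : (Lam₀ * S⁻¹ * Lam₀).det = Sig₀.det * (S.det)⁻¹ := by
      rw [← hsq]
      rw [det_mul, det_mul, Matrix.det_nonsing_inv, det_mul]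
      simp [Ring.inverse_eq_inv']
      ring
    have hSdet : S.det = Sig₀.det / (∏ i, hMpd.1.eigenvalues i) := by
      rw [eq_div_iff hPpos.ne', ← hPdet, hdetM]
      field_simp
      rw [mul_comm S.det Sig₀.det, mul_div_assoc, div_self hS.det_pos.ne', mul_one]
    have hSdet_rpow : S.det ^ (-(α/2)) =
        Sig₀.det ^ (-(α/2)) * (∏ i, hMpd.1.eigenvalues i) ^ (α/2) := by
      rw [hSdet, Real.div_rpow hSig₀.det_pos.le hPpos.le,
        Real.rpow_neg hPpos.le (α/2), div_inv_eq_mul]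
    have hΨS : Ψ S = (1+α)^(-(d:ℝ)/2) *
          (Sig₀.det ^ (-(α/2)) * (∏ i, hMpd.1.eigenvalues i) ^ (α/2))
        - (1+1/α) * (Sig₀.det ^ (-(α/2)) * (∏ i, hMpd.1.eigenvalues i) ^ (α/2)) *
          (∏ i, (1 + α * hMpd.1.eigenvalues i)) ^ (-(1:ℝ)/2) := by
      rw [hΨ S hS, hSdet_rpow, hQdet]
    have hdet1 : ((1:Matrix (Fin d) (Fin d) ℝ)
          + α • (1:Matrix (Fin d) (Fin d) ℝ)).det ^ (-(1:ℝ)/2)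
        = (1+α)^(-(d:ℝ)/2) := by
      rw [show (1:Matrix (Fin d) (Fin d) ℝ) + α • 1
            = ((1+α) : ℝ) • (1:Matrix (Fin d) (Fin d) ℝ) from by rw [add_smul, one_smul],
        Matrix.det_smul, det_one, mul_one, Fintype.card_fin, ← Real.rpow_natCast (1+α) d,
        ← Real.rpow_mul hα1.le, show (d:ℝ) * (-(1:ℝ)/2) = -(d:ℝ)/2 from by ring]
    have hΨ₀ : Ψ Sig₀ = (1+α)^(-(d:ℝ)/2) * Sig₀.det ^ (-(α/2))
        - (1+1/α) * Sig₀.det ^ (-(α/2)) * (1+α)^(-(d:ℝ)/2) := by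
      rw [hΨ Sig₀ hSig₀, hMSig, hdet1]
    have hMne : Lam₀ * S⁻¹ * Lam₀ ≠ 1 := by
      intro hM1
      apply hne
      have hSinv : S⁻¹ = Sig₀⁻¹ := by
        calc S⁻¹ = Lam₀⁻¹ * Lam₀ * S⁻¹ * (Lam₀ * Lam₀⁻¹) := by
              rw [Matrix.nonsing_inv_mul _ hLdet, Matrix.mul_nonsing_inv _ hLdet,
                one_mul, mul_one]
          _ = Lam₀⁻¹ * (Lam₀ * S⁻¹ * Lam₀) * Lam₀⁻¹ := by simp only [Matrix.mul_assoc]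
          _ = Lam₀⁻¹ * Lam₀⁻¹ := by rw [hM1, mul_one]
          _ = Sig₀⁻¹ := hSig₀inv.symm
      calc S = S⁻¹⁻¹ := (Matrix.nonsing_inv_nonsing_inv _ hSdetu).symm
        _ = Sig₀⁻¹⁻¹ := by rw [hSinv]
        _ = Sig₀ := Matrix.nonsing_inv_nonsing_inv _ hSig₀.det_pos.ne'.isUnit
    obtain ⟨j, hj⟩ : ∃ j, hMpd.1.eigenvalues j ≠ 1 := by
      by_contra hc
      push_neg at hc
      exact hMne (dpd_eq_one_of_eigenvalues hMpd.1 hc)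
    have hprod : (1+α)^(d:ℝ) * (∏ i, hMpd.1.eigenvalues i) ^ (α/(1+α))
        < ∏ i, (1 + α * hMpd.1.eigenvalues i) := by
      have h1 : ∏ i, ((1+α) * hMpd.1.eigenvalues i ^ (α/(1+α)))
          < ∏ i, (1 + α * hMpd.1.eigenvalues i) :=
        Finset.prod_lt_prod
          (fun i _ => by have := hμpos i; positivity)
          (fun i _ => dpd_perEig hα (hμpos i))
          ⟨j, Finset.mem_univ j, dpd_perEig_strict hα (hμpos j) hj⟩
      calc (1+α)^(d:ℝ) * (∏ i, hMpd.1.eigenvalues i) ^ (α/(1+α))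
          = ∏ i, ((1+α) * hMpd.1.eigenvalues i ^ (α/(1+α))) := by
            rw [Finset.prod_mul_distrib, Finset.prod_const,
              ← Real.finset_prod_rpow _ _ (fun i _ => (hμpos i).le) _,
              Finset.card_univ, Fintype.card_fin, Real.rpow_natCast]
        _ < _ := h1
    have hzlt : (∏ i, (1 + α * hMpd.1.eigenvalues i)) ^ (-(1:ℝ)/2)
        < (1+α)^(-(d:ℝ)/2) * (∏ i, hMpd.1.eigenvalues i) ^ (-(α/(1+α)/2)) := by
      have hbpos : 0 < (1+α)^(d:ℝ) * (∏ i, hMpd.1.eigenvalues i) ^ (α/(1+α)) := by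
        positivity
      have h2 := Real.rpow_lt_rpow_of_neg hbpos hprod (by norm_num : (-(1:ℝ)/2) < 0)
      have h3 : ((1+α)^(d:ℝ) * (∏ i, hMpd.1.eigenvalues i) ^ (α/(1+α))) ^ (-(1:ℝ)/2)
          = (1+α)^(-(d:ℝ)/2) * (∏ i, hMpd.1.eigenvalues i) ^ (-(α/(1+α)/2)) := by
        rw [Real.mul_rpow (by positivity) (by positivity), ← Real.rpow_mul hα1.le,
          ← Real.rpow_mul hPpos.le, show (d:ℝ)*(-(1:ℝ)/2) = -(d:ℝ)/2 from by ring,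
          show (α/(1+α))*(-(1:ℝ)/2) = -(α/(1+α)/2) from by ring]
      rw [h3] at h2
      exact h2
    have hxw : (∏ i, hMpd.1.eigenvalues i) ^ (α/2)
          * (∏ i, hMpd.1.eigenvalues i) ^ (-(α/(1+α)/2))
        = (∏ i, hMpd.1.eigenvalues i) ^ (α*(α/(1+α))/2) := by
      rw [← Real.rpow_add hPpos,
        show α/2 + (-(α/(1+α)/2)) = α*(α/(1+α))/2 from by field_simp; ring]
    have hyx : ((∏ i, hMpd.1.eigenvalues i) ^ (α*(α/(1+α))/2)) ^ ((1+α)/α)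
        = (∏ i, hMpd.1.eigenvalues i) ^ (α/2) := by
      rw [← Real.rpow_mul hPpos.le,
        show α*(α/(1+α))/2 * ((1+α)/α) = α/2 from by field_simp]
    have hphi : 0 ≤ (∏ i, hMpd.1.eigenvalues i) ^ (α/2)
        - (1+1/α) * (∏ i, hMpd.1.eigenvalues i) ^ (α*(α/(1+α))/2) + 1/α := by
      have h4 := dpd_phi hα (rpow_pos_of_pos hPpos (α*(α/(1+α))/2)) (α := α)
      rw [hyx] at h4
      exact h4
    rw [hΨ₀, hΨS]
    set A : ℝ := (1+α)^(-(d:ℝ)/2) with hA_def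
    set C : ℝ := Sig₀.det ^ (-(α/2)) with hC_def
    set x : ℝ := (∏ i, hMpd.1.eigenvalues i) ^ (α/2) with hx_def
    set w : ℝ := (∏ i, hMpd.1.eigenvalues i) ^ (-(α/(1+α)/2)) with hw_def
    set y : ℝ := (∏ i, hMpd.1.eigenvalues i) ^ (α*(α/(1+α))/2) with hy_def
    set z : ℝ := (∏ i, (1 + α * hMpd.1.eigenvalues i)) ^ (-(1:ℝ)/2) with hz_def
    have hApos : 0 < A := rpow_pos_of_pos hα1 _
    have hCpos : 0 < C := rpow_pos_of_pos hSig₀.det_pos _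
    have hxpos : 0 < x := rpow_pos_of_pos hPpos _
    have hstep1 : (1+1/α) * (C*x) * z < (1+1/α) * (C*x) * (A*w) := by
      have hc : (0:ℝ) < (1+1/α) * (C*x) := by positivity
      calc (1+1/α) * (C*x) * z = ((1+1/α) * (C*x)) * z := by ring
        _ < ((1+1/α) * (C*x)) * (A*w) := mul_lt_mul_of_pos_left hzlt hc
        _ = (1+1/α) * (C*x) * (A*w) := by ring
    have hstep2 : (1+1/α) * (C*x) * (A*w) = (1+1/α) * C * A * y := by
      rw [show (1+1/α) * (C*x) * (A*w) = (1+1/α)*C*A*(x*w) from by ring, hxw]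
    have hstep3 : 0 ≤ A*C*(x - (1+1/α)*y + 1/α) :=
      mul_nonneg (by positivity) hphi
    linarith only [hstep1, hstep2, hstep3]
  rcases eq_or_ne S Sig₀ with h | h
  · subst h
    exact ⟨le_rfl, fun _ => rfl⟩
  · exact ⟨(main h).le, fun he => absurd he (main h).ne'⟩
end

section
/- Let d be a positive integer and α > 0. Define, for every symmetric positive definite real d×d matrix M, Φ(M) := (1+α)^{-d/2} det(M)^{-α/2} − (1 + 1/α) det(M)^{-α/2} det( I_d + α M^{-1} )^{-1/2}. Then the identity matrix I_d is the unique minimizer of Φ over the set of symmetric positive definite d×d matrices: Φ(I_d) ≤ Φ(M) for all symmetric positive definite M, with equality only if M = I_d. -/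
open Matrix Real Finset
private lemma core_lt {α t : ℝ} (hα : 0 < α) (ht : 0 < t) (ht1 : t ≠ 1) :
    (1 + α) * t ^ (1 / (1 + α)) < t + α := by
  have h1α : (0:ℝ) < 1 + α := by linarith
  set u := t ^ (1 / (1 + α)) with hu
  have hu0 : 0 < u := rpow_pos_of_pos ht _
  have hut : u ^ (1 + α) = t := by
    rw [hu, ← Real.rpow_mul ht.le, one_div, inv_mul_cancel₀ h1α.ne', rpow_one]
  have hu1 : u ≠ 1 := by
    intro h
    apply ht1
    rw [← hut, h, Real.one_rpow]
  have hB := one_add_mul_self_lt_rpow_one_add (s := u - 1) (by linarith)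
    (fun h => hu1 (by linarith)) (by linarith : (1:ℝ) < 1 + α)
  rw [show (1 : ℝ) + (u - 1) = u by ring, hut] at hB
  have e : (1 + α) * (u - 1) = (1 + α) * u - (1 + α) := by ring
  linarith [hB, e ▸ hB]

private lemma core_le {α t : ℝ} (hα : 0 < α) (ht : 0 < t) :
    (1 + α) * t ^ (1 / (1 + α)) ≤ t + α := by
  by_cases ht1 : t = 1
  · subst ht1; rw [Real.one_rpow]; ring_nf; exact le_refl _
  · exact (core_lt hα ht ht1).le

/-- the key pointwise comparison, in "unsquared / un-inverted" form -/
private lemma XY {α t : ℝ} (hα : 0 < α) (ht : 0 < t) :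
    ((1 + α) * t ^ (α ^ 2 / (1 + α)) ≤ t ^ α * (1 + α / t)) ∧
      (t ≠ 1 → (1 + α) * t ^ (α ^ 2 / (1 + α)) < t ^ α * (1 + α / t)) := by
  have h1α : (0:ℝ) < 1 + α := by linarith
  have hX : t ^ α * (1 + α / t) = t ^ (α - 1) * (t + α) := by
    rw [show α = (α - 1) + 1 by ring, Real.rpow_add_one ht.ne']
    field_simp
    ring
  have hY : (1 + α) * t ^ (α ^ 2 / (1 + α)) = t ^ (α - 1) * ((1 + α) * t ^ (1 / (1 + α))) := by
    rw [show α ^ 2 / (1 + α) = (α - 1) + 1 / (1 + α) by field_simp; ring,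
      Real.rpow_add ht]
    ring
  have hpow : 0 < t ^ (α - 1) := rpow_pos_of_pos ht _
  constructor
  · rw [hX, hY]
    exact mul_le_mul_of_nonneg_left (core_le hα ht) hpow.le
  · intro ht1
    rw [hX, hY]
    exact (mul_lt_mul_iff_right₀ hpow).mpr (core_lt hα ht ht1)

private lemma pointwise {α t : ℝ} (hα : 0 < α) (ht : 0 < t) :
    (t ^ (-(α / 2)) * (1 + α / t) ^ (-(1:ℝ)/2)
      ≤ (1 + α) ^ (-(1:ℝ)/2) * t ^ (-(α ^ 2 / (2 * (1 + α))))) ∧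
    (t ≠ 1 → t ^ (-(α / 2)) * (1 + α / t) ^ (-(1:ℝ)/2)
      < (1 + α) ^ (-(1:ℝ)/2) * t ^ (-(α ^ 2 / (2 * (1 + α))))) := by
  have h1α : (0:ℝ) < 1 + α := by linarith
  have hfrac : 0 < 1 + α / t := by positivity
  have hYpos : 0 < (1 + α) * t ^ (α ^ 2 / (1 + α)) := by positivity
  have eX : t ^ (-(α / 2)) * (1 + α / t) ^ (-(1:ℝ)/2)
      = (t ^ α * (1 + α / t)) ^ (-(1:ℝ)/2) := by
    rw [Real.mul_rpow (rpow_nonneg ht.le _) hfrac.le, ← Real.rpow_mul ht.le]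
    congr 2
    ring
  have eY : (1 + α) ^ (-(1:ℝ)/2) * t ^ (-(α ^ 2 / (2 * (1 + α))))
      = ((1 + α) * t ^ (α ^ 2 / (1 + α))) ^ (-(1:ℝ)/2) := by
    rw [Real.mul_rpow h1α.le (rpow_nonneg ht.le _), ← Real.rpow_mul ht.le]
    congr 2
    field_simp
  rw [eX, eY]
  exact ⟨Real.rpow_le_rpow_of_nonpos hYpos (XY hα ht).1 (by norm_num),
    fun ht1 => Real.rpow_lt_rpow_of_neg hYpos ((XY hα ht).2 ht1) (by norm_num)⟩

private lemma young {α s : ℝ} (hα : 0 < α) (hs : 0 < s) :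
    (1 + 1 / α) * s ^ α ≤ s ^ (1 + α) + 1 / α := by
  have h1α : (0:ℝ) < 1 + α := by linarith
  have h1 := core_le (t := s ^ (-(1 + α))) hα (rpow_pos_of_pos hs _)
  have h2 : (s ^ (-(1 + α))) ^ (1 / (1 + α)) = s⁻¹ := by
    rw [← Real.rpow_mul hs.le, show -(1 + α) * (1 / (1 + α)) = -1 by field_simp,
      Real.rpow_neg_one]
  rw [h2] at h1
  have hsp : 0 < s ^ (1 + α) := rpow_pos_of_pos hs _
  have h4 := mul_le_mul_of_nonneg_right h1 hsp.le
  have e3 : (1 + α) * s⁻¹ * s ^ (1 + α) = (1 + α) * s ^ α := by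
    rw [show (1:ℝ) + α = α + 1 from add_comm 1 α, Real.rpow_add_one hs.ne']
    field_simp
  have e4 : (s ^ (-(1 + α)) + α) * s ^ (1 + α) = 1 + α * s ^ (1 + α) := by
    rw [Real.rpow_neg hs.le]
    field_simp
  rw [e3, e4] at h4
  have hk : (1:ℝ) + 1 / α = (1 + α) / α := by field_simp; ring
  have e5 : (1 + 1 / α) * s ^ α = ((1 + α) * s ^ α) / α := by
    rw [hk, div_mul_eq_mul_div]
  have e6 : s ^ (1 + α) + 1 / α = (1 + α * s ^ (1 + α)) / α := by
    rw [eq_div_iff hα.ne', add_mul, one_div, inv_mul_cancel₀ hα.ne']; ring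
  rw [e5, e6]
  exact div_le_div_of_nonneg_right h4 hα.le

private lemma spec_lemma {d : ℕ} (α : ℝ) (M : Matrix (Fin d) (Fin d) ℝ) (hM : M.PosDef) :
    ∃ t : Fin d → ℝ, (∀ i, 0 < t i) ∧ M.det = ∏ i, t i ∧
      ((1 : Matrix (Fin d) (Fin d) ℝ) + α • M⁻¹).det = ∏ i, (1 + α / t i) ∧
      ((∀ i, t i = 1) → M = 1) := by
  have hH := hM.isHermitian
  set t := hH.eigenvalues with ht
  have ht0 : ∀ i, 0 < t i := hM.eigenvalues_pos
  refine ⟨t, ht0, ?_, ?_, ?_⟩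
  · simpa using hH.det_eq_prod_eigenvalues
  · set V : Matrix (Fin d) (Fin d) ℝ := (hH.eigenvectorUnitary : Matrix (Fin d) (Fin d) ℝ) with hV
    have hVV : V * star V = 1 := Matrix.mem_unitaryGroup_iff.mp hH.eigenvectorUnitary.2
    have hspec : M = V * diagonal t * star V := by
      have := hH.spectral_theorem
      rwa [RCLike.ofReal_real_eq_id, Function.id_comp] at this
    have key : M + α • (1 : Matrix (Fin d) (Fin d) ℝ)
        = V * diagonal (fun i => t i + α) * star V := by
      have h1 : α • (1 : Matrix (Fin d) (Fin d) ℝ) = V * (α • (1 : Matrix (Fin d) (Fin d) ℝ)) * star V := by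
        rw [Matrix.mul_smul, Matrix.mul_one, Matrix.smul_mul, hVV]
      rw [hspec]
      nth_rewrite 1 [h1]
      rw [← Matrix.add_mul, ← Matrix.mul_add]
      congr 2
      rw [Matrix.smul_one_eq_diagonal, Matrix.diagonal_add]
    have hdV : V.det * (star V).det = 1 := by rw [← Matrix.det_mul, hVV, Matrix.det_one]
    have hdetsum : (M + α • (1 : Matrix (Fin d) (Fin d) ℝ)).det = ∏ i, (t i + α) := by
      rw [key, Matrix.det_mul, Matrix.det_mul, mul_comm, ← mul_assoc, mul_comm (star V).det,
        hdV, one_mul, Matrix.det_diagonal]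
    have hdet0 : IsUnit M.det := hM.det_pos.ne'.isUnit
    have hinv : (1 : Matrix (Fin d) (Fin d) ℝ) + α • M⁻¹
        = M⁻¹ * (M + α • (1 : Matrix (Fin d) (Fin d) ℝ)) := by
      rw [Matrix.mul_add, Matrix.nonsing_inv_mul M hdet0, Matrix.mul_smul, Matrix.mul_one]
    rw [hinv, Matrix.det_mul, Matrix.det_nonsing_inv, hdetsum, Ring.inverse_eq_inv',
      hH.det_eq_prod_eigenvalues]
    simp only [RCLike.ofReal_real_eq_id, id]
    rw [← Finset.prod_inv_distrib, ← Finset.prod_mul_distrib]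
    refine Finset.prod_congr rfl fun i _ => ?_
    field_simp [(ht0 i).ne']
    exact mul_div_cancel_left₀ _ (ht0 i).ne'
  · intro hone
    set V : Matrix (Fin d) (Fin d) ℝ := (hH.eigenvectorUnitary : Matrix (Fin d) (Fin d) ℝ) with hV
    have hVV : V * star V = 1 := Matrix.mem_unitaryGroup_iff.mp hH.eigenvectorUnitary.2
    have hspec : M = V * diagonal t * star V := by
      have := hH.spectral_theorem
      rwa [RCLike.ofReal_real_eq_id, Function.id_comp] at this
    rw [hspec]
    have : diagonal t = 1 := by
      rw [show t = fun _ => (1:ℝ) from funext hone, Matrix.diagonal_one]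
    rw [this, Matrix.mul_one, hVV]

/-- The reduced criterion `Φ(M) = (1+α)^{-d/2} det(M)^{-α/2}
− (1+1/α) det(M)^{-α/2} det(I + αM⁻¹)^{-1/2}` is uniquely minimized at the
identity matrix over symmetric positive definite matrices. -/
theorem reduced_dpd_criterion_unique_minimizer (d : ℕ) (hd : 0 < d)
    (α : ℝ) (hα : 0 < α)
    (Φ : Matrix (Fin d) (Fin d) ℝ → ℝ)
    (hΦ : ∀ M : Matrix (Fin d) (Fin d) ℝ, M.PosDef →
      Φ M = (1 + α) ^ (-(d : ℝ) / 2) * M.det ^ (-(α / 2)) -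
        (1 + 1 / α) * M.det ^ (-(α / 2)) *
          ((1 : Matrix (Fin d) (Fin d) ℝ) + α • M⁻¹).det ^ (-(1 : ℝ) / 2)) :
    ∀ M : Matrix (Fin d) (Fin d) ℝ, M.PosDef →
      Φ (1 : Matrix (Fin d) (Fin d) ℝ) ≤ Φ M ∧
        (Φ M = Φ (1 : Matrix (Fin d) (Fin d) ℝ) → M = 1) := by
  intro M hM
  have h1α : (0:ℝ) < 1 + α := by linarith
  have hk0 : (0:ℝ) < 1 + 1 / α := by positivity
  set c : ℝ := (1 + α) ^ (-(d : ℝ) / 2) with hc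
  have hc0 : 0 < c := rpow_pos_of_pos h1α _
  -- value at the identity
  have hΦ1 : Φ 1 = -(c / α) := by
    rw [hΦ 1 Matrix.PosDef.one]
    have e1 : ((1 : Matrix (Fin d) (Fin d) ℝ) + α • (1 : Matrix (Fin d) (Fin d) ℝ)⁻¹).det
        = ((1 + α) ^ d : ℝ) := by
      rw [inv_one, show (1 : Matrix (Fin d) (Fin d) ℝ) + α • 1 = diagonal (fun _ => 1 + α) by
        rw [Matrix.smul_one_eq_diagonal, ← Matrix.diagonal_one, Matrix.diagonal_add],
        Matrix.det_diagonal]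
      simp
    rw [Matrix.det_one, e1, Real.one_rpow]
    have e2 : ((1 + α) ^ d : ℝ) ^ (-(1:ℝ)/2) = c := by
      rw [← Real.rpow_natCast (1 + α) d, ← Real.rpow_mul h1α.le, hc]
      congr 1
      ring
    rw [e2]
    field_simp
    ring
  -- eigenvalue decomposition
  obtain ⟨t, ht0, hdet, hdet2, hid⟩ := spec_lemma α M hM
  set P : ℝ := ∏ i, t i with hP
  have hP0 : 0 < P := Finset.prod_pos fun i _ => ht0 i
  set a : Fin d → ℝ := fun i => t i ^ (-(α / 2)) * (1 + α / t i) ^ (-(1:ℝ)/2) with ha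
  set b : Fin d → ℝ := fun i => (1 + α) ^ (-(1:ℝ)/2) * t i ^ (-(α ^ 2 / (2 * (1 + α)))) with hb
  have hfrac : ∀ i, (0:ℝ) < 1 + α / t i := fun i => by have := ht0 i; positivity
  have ha0 : ∀ i, 0 < a i := fun i =>
    mul_pos (rpow_pos_of_pos (ht0 i) _) (rpow_pos_of_pos (hfrac i) _)
  have hab : ∀ i, a i ≤ b i := fun i => (pointwise hα (ht0 i)).1
  have hab' : ∀ i, t i ≠ 1 → a i < b i := fun i => (pointwise hα (ht0 i)).2
  -- rewrite Φ M
  have hT : M.det ^ (-(α / 2)) * ((1 : Matrix (Fin d) (Fin d) ℝ) + α • M⁻¹).det ^ (-(1:ℝ)/2)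
      = ∏ i, a i := by
    rw [hdet, hdet2, ← Real.finset_prod_rpow _ _ (fun i _ => (ht0 i).le) _,
      ← Real.finset_prod_rpow _ _ (fun i _ => (hfrac i).le) _, ← Finset.prod_mul_distrib]
  have key1 : Φ M = c * P ^ (-(α / 2)) - (1 + 1 / α) * ∏ i, a i := by
    rw [hΦ M hM, mul_assoc, hT, hdet]
  -- bound the product of b's
  have hU : (∏ i, b i) = c * P ^ (-(α ^ 2 / (2 * (1 + α)))) := by
    rw [hb]
    rw [Finset.prod_mul_distrib, Finset.prod_const, Finset.card_univ, Fintype.card_fin,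
      Real.finset_prod_rpow _ _ (fun i _ => (ht0 i).le) _]
    congr 1
    rw [← Real.rpow_natCast ((1 + α) ^ (-(1:ℝ)/2)) d, ← Real.rpow_mul h1α.le, hc]
    congr 1
    ring
  -- Young step
  set s : ℝ := P ^ (-(α / (2 * (1 + α)))) with hs
  have hs0 : 0 < s := rpow_pos_of_pos hP0 _
  have hsα : s ^ α = P ^ (-(α ^ 2 / (2 * (1 + α)))) := by
    rw [hs, ← Real.rpow_mul hP0.le]
    congr 1
    ring
  have hsα1 : s ^ (1 + α) = P ^ (-(α / 2)) := by
    rw [hs, ← Real.rpow_mul hP0.le]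
    congr 1
    field_simp
  have hyoung : (1 + 1 / α) * (c * P ^ (-(α ^ 2 / (2 * (1 + α)))))
      ≤ c * P ^ (-(α / 2)) + c / α := by
    calc (1 + 1 / α) * (c * P ^ (-(α ^ 2 / (2 * (1 + α)))))
        = c * ((1 + 1 / α) * s ^ α) := by rw [hsα]; ring
      _ ≤ c * (s ^ (1 + α) + 1 / α) := by
          exact mul_le_mul_of_nonneg_left (young hα hs0) hc0.le
      _ = c * P ^ (-(α / 2)) + c / α := by rw [hsα1]; ring
  have hprodle : (∏ i, a i) ≤ c * P ^ (-(α ^ 2 / (2 * (1 + α)))) := by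
    rw [← hU]
    exact Finset.prod_le_prod (fun i _ => (ha0 i).le) (fun i _ => hab i)
  constructor
  · rw [hΦ1, key1]
    nlinarith [mul_le_mul_of_nonneg_left hprodle hk0.le, hyoung]
  · intro heq
    by_contra hne
    have hj : ∃ j, t j ≠ 1 := by
      by_contra hall
      push_neg at hall
      exact hne (hid hall)
    obtain ⟨j, hj⟩ := hj
    have hprodlt : (∏ i, a i) < c * P ^ (-(α ^ 2 / (2 * (1 + α)))) := by
      rw [← hU]
      exact Finset.prod_lt_prod (fun i _ => ha0 i) (fun i _ => hab i)
        ⟨j, Finset.mem_univ j, hab' j hj⟩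
    have : Φ 1 < Φ M := by
      rw [hΦ1, key1]
      nlinarith [mul_lt_mul_of_pos_left hprodlt hk0, hyoung]
    rw [heq] at this
    exact lt_irrefl _ this
end

section
/- Let d be a positive integer and α > 0. Define φ : (0, ∞) → ℝ by φ(c) := c^{-dα/2} [ (1+α)^{-d/2} − (1 + 1/α) (1 + α/c)^{-d/2} ]. Then c = 1 is the unique minimizer of φ on (0, ∞): φ(1) ≤ φ(c) for all c > 0, with equality only if c = 1. -/
open Real

/-- Strict two-point weighted AM-GM. -/
lemma strict_amgm2 (w₁ w₂ p₁ p₂ : ℝ) (h₁ : 0 < w₁) (h₂ : 0 < w₂)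
    (hw : w₁ + w₂ = 1) (hp₁ : 0 < p₁) (hp₂ : 0 < p₂) (hne : p₁ ≠ p₂) :
    p₁ ^ w₁ * p₂ ^ w₂ < w₁ * p₁ + w₂ * p₂ := by
  have hlog : Real.log p₁ ≠ Real.log p₂ := fun h =>
    hne (Real.log_injOn_pos (Set.mem_Ioi.mpr hp₁) (Set.mem_Ioi.mpr hp₂) h)
  have h := strictConvexOn_exp.2 (Set.mem_univ (Real.log p₁))
      (Set.mem_univ (Real.log p₂)) hlog h₁ h₂ hw
  simp only [smul_eq_mul] at h
  rwa [Real.exp_add, mul_comm w₁ (Real.log p₁), mul_comm w₂ (Real.log p₂),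
    Real.exp_mul, Real.exp_mul, Real.exp_log hp₁, Real.exp_log hp₂] at h

lemma key_ineq (s α c : ℝ) (hs : 0 < s) (hα : 0 < α) (hc : 0 < c) (hne : c ≠ 1) :
    (1 + α) ^ (s + 1) * c ^ s < (α + c ^ (s * α)) * (c + α) ^ s := by
  have h1α : (0:ℝ) < 1 + α := by linarith
  set w₁ : ℝ := 1 / (1 + α) with hw₁def
  set w₂ : ℝ := α / (1 + α) with hw₂def
  have hw₁ : 0 < w₁ := by positivity
  have hw₂ : 0 < w₂ := by positivity
  have hw : w₁ + w₂ = 1 := by rw [hw₁def, hw₂def]; field_simp; try ring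
  have hXpos : 0 < c ^ (s * α) := Real.rpow_pos_of_pos hc _
  have hXne : c ^ (s * α) ≠ 1 := by
    rcases lt_trichotomy c 1 with h | h | h
    · exact ne_of_lt (Real.rpow_lt_one hc.le h (by positivity))
    · exact absurd h hne
    · exact ne_of_gt ((Real.one_lt_rpow_iff_of_pos hc).mpr (Or.inl ⟨h, by positivity⟩))
  have a1 := strict_amgm2 w₁ w₂ (c ^ (s * α)) 1 hw₁ hw₂ hw hXpos one_pos hXne
  have a2 := strict_amgm2 w₁ w₂ c 1 hw₁ hw₂ hw hc one_pos hne
  rw [Real.one_rpow, mul_one, mul_one] at a1 a2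
  have a2s : (c ^ w₁) ^ s < (w₁ * c + w₂) ^ s :=
    Real.rpow_lt_rpow (Real.rpow_nonneg hc.le _) a2 hs
  have hmul : (c ^ (s * α)) ^ w₁ * (c ^ w₁) ^ s <
      (w₁ * c ^ (s * α) + w₂) * (w₁ * c + w₂) ^ s :=
    mul_lt_mul'' a1 a2s (Real.rpow_nonneg hXpos.le _)
      (Real.rpow_nonneg (Real.rpow_nonneg hc.le _) _)
  have hL : (c ^ (s * α)) ^ w₁ * (c ^ w₁) ^ s = c ^ s := by
    rw [← Real.rpow_mul hc.le, ← Real.rpow_mul hc.le, ← Real.rpow_add hc]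
    congr 1
    rw [hw₁def]
    field_simp
    ring
  have hR1 : w₁ * c ^ (s * α) + w₂ = (α + c ^ (s * α)) / (1 + α) := by
    rw [hw₁def, hw₂def]; field_simp; try ring
  have hR2 : w₁ * c + w₂ = (c + α) / (1 + α) := by
    rw [hw₁def, hw₂def]; field_simp; try ring
  rw [hL, hR1, hR2, Real.div_rpow (by linarith) h1α.le] at hmul
  have hexp : (1 + α) ^ (s + 1) = (1 + α) ^ s * (1 + α) := by
    rw [Real.rpow_add_one h1α.ne' s]
  have hQ : 0 < (c + α) ^ s := Real.rpow_pos_of_pos (by linarith) _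
  have hP : 0 < (1 + α) ^ s := Real.rpow_pos_of_pos h1α _
  have heq : (α + c ^ (s * α)) / (1 + α) * ((c + α) ^ s / (1 + α) ^ s)
      = ((α + c ^ (s * α)) * (c + α) ^ s) / ((1 + α) ^ s * (1 + α)) := by
    field_simp
  rw [heq] at hmul
  rw [hexp]
  calc (1 + α) ^ s * (1 + α) * c ^ s
      < (1 + α) ^ s * (1 + α) *
        (((α + c ^ (s * α)) * (c + α) ^ s) / ((1 + α) ^ s * (1 + α))) := by
        exact (mul_lt_mul_iff_right₀ (by positivity)).mpr hmul
    _ = (α + c ^ (s * α)) * (c + α) ^ s := by field_simp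

lemma helper_ineq (α X P Q C : ℝ) (hα : 0 < α) (hX : 0 < X) (hP : 0 < P)
    (hQ : 0 < Q) (hC : 0 < C) (key : (1 + α) * P * C < (α + X) * Q) :
    -(1/α) * P⁻¹ < X⁻¹ * (P⁻¹ - (1 + 1/α) * (C / Q)) := by
  have heq : X⁻¹ * (P⁻¹ - (1 + 1/α) * (C / Q)) - (-(1/α) * P⁻¹)
      = ((α + X) * Q - (1 + α) * P * C) / (α * X * P * Q) := by
    field_simp; ring
  have hpos : 0 < X⁻¹ * (P⁻¹ - (1 + 1/α) * (C / Q)) - (-(1/α) * P⁻¹) := by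
    rw [heq]
    exact div_pos (by linarith) (by positivity)
  linarith

/-- The scalar criterion
`φ(c) = c^{-dα/2} [ (1+α)^{-d/2} − (1+1/α)(1+α/c)^{-d/2} ]` is uniquely
minimized on `(0, ∞)` at `c = 1`. -/
theorem scalar_dpd_criterion_unique_minimizer (d : ℕ) (hd : 0 < d)
    (α : ℝ) (hα : 0 < α)
    (φ : ℝ → ℝ)
    (hφ : ∀ c : ℝ, 0 < c →
      φ c = c ^ (-((d : ℝ) * α) / 2) *
        ((1 + α) ^ (-(d : ℝ) / 2) - (1 + 1 / α) * (1 + α / c) ^ (-(d : ℝ) / 2))) :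
    ∀ c : ℝ, 0 < c → φ 1 ≤ φ c ∧ (φ c = φ 1 → c = 1) := by
  intro c hc
  by_cases hc1 : c = 1
  · subst hc1; exact ⟨le_rfl, fun _ => rfl⟩
  set s : ℝ := (d : ℝ) / 2 with hsdef
  have hs : 0 < s := by
    have : (0:ℝ) < (d:ℝ) := by exact_mod_cast hd
    positivity
  have h1α : (0:ℝ) < 1 + α := by linarith
  have hP : 0 < (1 + α) ^ s := Real.rpow_pos_of_pos h1α _
  have hQ : 0 < (c + α) ^ s := Real.rpow_pos_of_pos (by linarith) _
  have hC : 0 < c ^ s := Real.rpow_pos_of_pos hc _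
  have hX : 0 < c ^ (s * α) := Real.rpow_pos_of_pos hc _
  have he1 : -((d : ℝ) * α) / 2 = -(s * α) := by rw [hsdef]; ring
  have he2 : -(d : ℝ) / 2 = -s := by rw [hsdef]; ring
  have hφ1 : φ 1 = -(1/α) * ((1 + α) ^ s)⁻¹ := by
    rw [hφ 1 one_pos, he2, div_one, Real.one_rpow, one_mul,
      Real.rpow_neg h1α.le]
    field_simp
    ring
  have hφc : φ c = (c ^ (s * α))⁻¹ *
      (((1 + α) ^ s)⁻¹ - (1 + 1/α) * (c ^ s / (c + α) ^ s)) := by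
    rw [hφ c hc, he1, he2, Real.rpow_neg hc.le, Real.rpow_neg h1α.le]
    congr 2
    have hac : 1 + α / c = (c + α) / c := by field_simp
    rw [hac, Real.rpow_neg (by positivity),
      Real.div_rpow (by linarith) hc.le, inv_div]
  have key := key_ineq s α c hs hα hc hc1
  have key' : (1 + α) * (1 + α) ^ s * c ^ s < (α + c ^ (s * α)) * (c + α) ^ s := by
    rw [Real.rpow_add_one h1α.ne' s] at key
    linarith [key]
  have hmain : φ 1 < φ c := by
    rw [hφ1, hφc]
    exact helper_ineq α (c ^ (s * α)) ((1 + α) ^ s) ((c + α) ^ s) (c ^ s)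
      hα hX hP hQ hC (by linarith)
  exact ⟨hmain.le, fun h => absurd h (by linarith)⟩
end
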